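/- arXiv:1209.1435 — 8 statements merged into one kernel-verified Lean document; each statement's English description precedes it below -/
import Mathlib

section
/- Let p : E → B, γ : C → E be maps of sets, ξ descent data for γ relative to p, and let c : C → H be the coequalizer (quotient) of the two maps ξ, π₂ : E×_B C → C where π₂(e,x) = x and ξ is the descent action. Then ker(c) = {(x, ξ_{γ(x),γ(y)}(x)) | x, y ∈ C, p(γ(x)) = p(γ(y))}. -/
/-- Descent data in `SET` for `γ : C → E` relative to `p : E → B`, as an action
`ξ(e,c)` on the pullback `E ×_B C = {(e,c) | p e = p (γ c)}`. -/
structure DescentData {E B C : Type*} (p : E → B) (γ : C → E) where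
  act : ∀ (e : E) (c : C), p e = p (γ c) → C
  fib : ∀ e c h, γ (act e c h) = e
  neut : ∀ c, act (γ c) c rfl = c
  assoc : ∀ (e' e'' : E) (c : C) (h' : p e' = p (γ c)) (h'' : p e'' = p (γ c)),
    act e'' (act e' c h') (by rw [fib]; exact h''.trans h'.symm) = act e'' c h''

lemma descent_rel_equivalence {E B C : Type*} (p : E → B) (γ : C → E)
    (ξ : DescentData p γ) :
    Equivalence (fun u v : C => ∃ (e : E) (h : p e = p (γ v)), u = ξ.act e v h) := by
  constructor
  · intro u
    exact ⟨γ u, rfl, (ξ.neut u).symm⟩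
  · rintro u v ⟨e, h, rfl⟩
    refine ⟨γ v, by rw [ξ.fib]; exact h.symm, ?_⟩
    rw [ξ.assoc, ξ.neut]
    rfl
  · rintro u v w ⟨e, h, rfl⟩ ⟨e', h', rfl⟩
    refine ⟨e, ?_, ?_⟩
    · rw [ξ.fib] at h; exact h.trans h'
    · rw [ξ.assoc]

lemma descent_rel_symm_iff {E B C : Type*} (p : E → B) (γ : C → E)
    (ξ : DescentData p γ) (x z : C) :
    (∃ (e : E) (h : p e = p (γ x)), z = ξ.act e x h) ↔
      ∃ (y : C) (h : p (γ x) = p (γ y)), z = ξ.act (γ y) x h.symm := by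
  constructor
  · rintro ⟨e, h, rfl⟩
    refine ⟨ξ.act e x h, h.symm.trans (by rw [ξ.fib]), ?_⟩
    congr 1
    rw [ξ.fib]
  · rintro ⟨y, h, rfl⟩
    exact ⟨γ y, h.symm, rfl⟩

/-- let `c : C → H` be the coequalizer of `ξ` and `π₂`, i.e. the quotient
of `C` by the equivalence relation generated by `ξ(e,x) ~ x`.  Then
`ker c = {(x, ξ_{γ x, γ y}(x)) | x y : C, p (γ x) = p (γ y)}`. -/
theorem descent_coequalizer_kernel {E B C : Type*} (p : E → B) (γ : C → E)
    (ξ : DescentData p γ) (x z : C) :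
    Quot.mk (fun u v : C => ∃ (e : E) (h : p e = p (γ v)), u = ξ.act e v h) x =
      Quot.mk (fun u v : C => ∃ (e : E) (h : p e = p (γ v)), u = ξ.act e v h) z ↔
    ∃ (y : C) (h : p (γ x) = p (γ y)), z = ξ.act (γ y) x h.symm := by
  rw [Quot.eq, (descent_rel_equivalence p γ ξ).eqvGen_iff,
    ← descent_rel_symm_iff p γ ξ x z]
  exact ⟨fun h => (descent_rel_equivalence p γ ξ).symm h, fun h =>
    (descent_rel_equivalence p γ ξ).symm h⟩
end

section
/- In a category with pullbacks, given p : E → B and descent data ξ : T^p γ → γ for γ : C → E relative to p (i.e. ξ ∘ η^p_γ = id and ξ ∘ T^p ξ = ξ ∘ μ^p_γ), the pair of maps ⟨ξ, π₂⟩ : E×_B C → C × C is a monomorphism. -/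
open CategoryTheory Limits

section
variable {C : Type*} [Category C] [HasPullbacks C]

/-- The unit `η^p_γ : γ → T^p γ` of the monad `T^p = p* ∘ p_*`, where `T^p γ` is
realized as the pullback `E ×_B X` of `p` and `γ ≫ p`. -/
noncomputable def etaP {E B X : C} (p : E ⟶ B) (γ : X ⟶ E) : X ⟶ pullback p (γ ≫ p) :=
  pullback.lift γ (𝟙 X) (by simp)

/-- The action of the monad `T^p` on a morphism `φ` of the slice category over `E`. -/
noncomputable def Tmap {E B : C} (p : E ⟶ B) {X Y : C} {γX : X ⟶ E} {γY : Y ⟶ E}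
    (φ : X ⟶ Y) (hφ : φ ≫ γY = γX) : pullback p (γX ≫ p) ⟶ pullback p (γY ≫ p) :=
  pullback.lift (pullback.fst p (γX ≫ p)) (pullback.snd p (γX ≫ p) ≫ φ)
    (by rw [pullback.condition]; simp [← hφ])

/-- The multiplication `μ^p_γ : T^p T^p γ → T^p γ` of the monad `T^p`. -/
noncomputable def muP {E B X : C} (p : E ⟶ B) (γ : X ⟶ E) :
    pullback p (pullback.fst p (γ ≫ p) ≫ p) ⟶ pullback p (γ ≫ p) :=
  pullback.lift (pullback.fst p (pullback.fst p (γ ≫ p) ≫ p))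
    (pullback.snd p (pullback.fst p (γ ≫ p) ≫ p) ≫ pullback.snd p (γ ≫ p))
    (by refine pullback.condition.trans ?_; simp only [Category.assoc]
        exact congrArg _ pullback.condition)

end

/-- for descent data `ξ : T^p γ → γ` relative to `p` (i.e. `ξ` is a slice
morphism with `ξ ∘ η^p_γ = id` and `ξ ∘ T^p ξ = ξ ∘ μ^p_γ`), the pair
`⟨ξ, π₂⟩ : E ×_B X ⟶ X × X` is a monomorphism. -/
theorem descent_pair_mono {C : Type*} [Category C] [HasPullbacks C] [HasBinaryProducts C]
    {E B X : C} (p : E ⟶ B) (γ : X ⟶ E)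
    (ξ : pullback p (γ ≫ p) ⟶ X)
    (hslice : ξ ≫ γ = pullback.fst p (γ ≫ p))
    (hunit : etaP p γ ≫ ξ = 𝟙 X)
    (hassoc : Tmap p ξ hslice ≫ ξ = muP p γ ≫ ξ) :
    Mono (prod.lift ξ (pullback.snd p (γ ≫ p))) := by
  refine ⟨fun {Z} a b h => ?_⟩
  have h1 : a ≫ ξ = b ≫ ξ := by
    have := h =≫ prod.fst; simpa only [Category.assoc, prod.lift_fst] using this
  have h2 : a ≫ pullback.snd p (γ ≫ p) = b ≫ pullback.snd p (γ ≫ p) := by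
    have := h =≫ prod.snd; simpa only [Category.assoc, prod.lift_snd] using this
  apply pullback.hom_ext
  · rw [← hslice, ← Category.assoc, ← Category.assoc, h1]
  · exact h2
end

section
/- In a topos, given p : E → B and descent data (γ, ξ) for γ : C → E relative to p, the pair ⟨ξ, π₂^{p∘γ}⟩ : E×_B C → C × C is an equivalence relation on C: it is monic, reflexive (via the unit η^p_γ), symmetric (via the involution ⟨γ∘π₂, ξ⟩), and transitive (via the multiplication μ^p_γ). -/
open CategoryTheory Limits

/-- A subobject classifier: a morphism `truth : ⊤ ⟶ Ω` such that every monomorphism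
is a pullback of `truth` along a unique characteristic map. -/
structure Classifier (C : Type*) [Category C] [HasTerminal C] where
  Ω : C
  truth : ⊤_ C ⟶ Ω
  χ : ∀ {U X : C} (m : U ⟶ X), Mono m → (X ⟶ Ω)
  isPullback : ∀ {U X : C} (m : U ⟶ X) (hm : Mono m),
    IsPullback m (terminal.from U) (χ m hm) truth
  uniq : ∀ {U X : C} (m : U ⟶ X) (hm : Mono m) (χ' : X ⟶ Ω),
    IsPullback m (terminal.from U) χ' truth → χ' = χ m hm

/-- in a topos, the pair `⟨ξ, π₂⟩` associated with descent data `(γ, ξ)`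
is an equivalence relation on `X`: it is monic, reflexive via the unit `η^p_γ`,
symmetric via the involution `⟨γ ∘ π₂, ξ⟩`, and transitive via `μ^p_γ`. -/
theorem descent_pair_is_equivalence_relation
    {C : Type*} [Category C] [HasFiniteLimits C] [CartesianMonoidalCategory C] [MonoidalClosed C]
    (cls : _root_.Classifier C)
    {E B X : C} (p : E ⟶ B) (γ : X ⟶ E)
    (ξ : pullback p (γ ≫ p) ⟶ X)
    (hslice : ξ ≫ γ = pullback.fst p (γ ≫ p))
    (hunit : etaP p γ ≫ ξ = 𝟙 X)
    (hassoc : Tmap p ξ hslice ≫ ξ = muP p γ ≫ ξ) :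
    Mono (prod.lift ξ (pullback.snd p (γ ≫ p))) ∧
    (etaP p γ ≫ ξ = 𝟙 X ∧ etaP p γ ≫ pullback.snd p (γ ≫ p) = 𝟙 X) ∧
    (pullback.lift (pullback.snd p (γ ≫ p) ≫ γ) ξ
        (by simp only [Category.assoc, ← pullback.condition]
            rw [← Category.assoc, hslice]) ≫ ξ = pullback.snd p (γ ≫ p) ∧
      pullback.lift (pullback.snd p (γ ≫ p) ≫ γ) ξ
        (by simp only [Category.assoc, ← pullback.condition]
            rw [← Category.assoc, hslice]) ≫ pullback.snd p (γ ≫ p) = ξ) ∧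
    (∃ t : pullback (pullback.snd p (γ ≫ p)) ξ ⟶ pullback p (γ ≫ p),
      t ≫ ξ = pullback.fst (pullback.snd p (γ ≫ p)) ξ ≫ ξ ∧
      t ≫ pullback.snd p (γ ≫ p) =
        pullback.snd (pullback.snd p (γ ≫ p)) ξ ≫ pullback.snd p (γ ≫ p)) := by
  have hxp : ξ ≫ γ ≫ p = pullback.fst p (γ ≫ p) ≫ p := by
    rw [← Category.assoc, hslice]
  refine ⟨?_, ⟨hunit, pullback.lift_snd _ _ _⟩, ⟨?_, pullback.lift_snd _ _ _⟩, ?_⟩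
  · constructor
    intro Z u v h
    have h1 : u ≫ prod.lift ξ (pullback.snd p (γ ≫ p)) ≫ prod.fst =
        v ≫ prod.lift ξ (pullback.snd p (γ ≫ p)) ≫ prod.fst := by rw [reassoc_of% h]
    have h2 : u ≫ prod.lift ξ (pullback.snd p (γ ≫ p)) ≫ prod.snd =
        v ≫ prod.lift ξ (pullback.snd p (γ ≫ p)) ≫ prod.snd := by rw [reassoc_of% h]
    simp only [prod.lift_fst, prod.lift_snd] at h1 h2
    apply pullback.hom_ext
    · rw [← hslice, ← Category.assoc, ← Category.assoc, h1]
    · exact h2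
  · -- symmetry, hard half
    have key : ∀ hpf, pullback.lift (pullback.snd p (γ ≫ p) ≫ γ) ξ hpf ≫ ξ =
        pullback.snd p (γ ≫ p) := ?_
    · exact key _
    intro hpf
    have hd : (pullback.snd p (γ ≫ p) ≫ γ) ≫ p = 𝟙 _ ≫ pullback.fst p (γ ≫ p) ≫ p := by
      rw [Category.id_comp, pullback.condition, Category.assoc]
    set d : pullback p (γ ≫ p) ⟶ pullback p (pullback.fst p (γ ≫ p) ≫ p) :=
      pullback.lift (pullback.snd p (γ ≫ p) ≫ γ) (𝟙 _) hd with hdd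
    have h1 : d ≫ Tmap p ξ hslice = pullback.lift (pullback.snd p (γ ≫ p) ≫ γ) ξ hpf := by
      apply pullback.hom_ext
      · simp [hdd, Tmap]; erw [pullback.lift_fst, pullback.lift_fst, pullback.lift_fst]
      · simp [hdd, Tmap]; erw [pullback.lift_snd, pullback.lift_snd_assoc, pullback.lift_snd, Category.id_comp]
    have h2 : d ≫ muP p γ = pullback.snd p (γ ≫ p) ≫ etaP p γ := by
      apply pullback.hom_ext
      · simp [hdd, muP, etaP]; erw [pullback.lift_fst, pullback.lift_fst, pullback.lift_fst]
      · simp [hdd, muP, etaP]; erw [pullback.lift_snd, pullback.lift_snd_assoc, pullback.lift_snd, Category.id_comp, Category.comp_id]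
    calc pullback.lift (pullback.snd p (γ ≫ p) ≫ γ) ξ hpf ≫ ξ
        = d ≫ Tmap p ξ hslice ≫ ξ := by rw [← h1, Category.assoc]
      _ = d ≫ muP p γ ≫ ξ := by rw [hassoc]
      _ = pullback.snd p (γ ≫ p) ≫ etaP p γ ≫ ξ := by
          rw [← Category.assoc, h2, Category.assoc]
      _ = pullback.snd p (γ ≫ p) := by rw [hunit, Category.comp_id]
  · -- transitivity
    have hd2 : (pullback.fst (pullback.snd p (γ ≫ p)) ξ ≫ pullback.fst p (γ ≫ p)) ≫ p =
        pullback.snd (pullback.snd p (γ ≫ p)) ξ ≫ pullback.fst p (γ ≫ p) ≫ p := by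
      calc (pullback.fst (pullback.snd p (γ ≫ p)) ξ ≫ pullback.fst p (γ ≫ p)) ≫ p
          = pullback.fst (pullback.snd p (γ ≫ p)) ξ ≫ pullback.snd p (γ ≫ p) ≫ (γ ≫ p) := by
            rw [Category.assoc, pullback.condition (f := p) (g := γ ≫ p)]
        _ = pullback.snd (pullback.snd p (γ ≫ p)) ξ ≫ ξ ≫ (γ ≫ p) := by
            rw [← Category.assoc, pullback.condition (f := pullback.snd p (γ ≫ p)) (g := ξ),
              Category.assoc]
        _ = pullback.snd (pullback.snd p (γ ≫ p)) ξ ≫ pullback.fst p (γ ≫ p) ≫ p := by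
            rw [← hxp]
    set d2 : pullback (pullback.snd p (γ ≫ p)) ξ ⟶ pullback p (pullback.fst p (γ ≫ p) ≫ p) :=
      pullback.lift (pullback.fst (pullback.snd p (γ ≫ p)) ξ ≫ pullback.fst p (γ ≫ p))
        (pullback.snd (pullback.snd p (γ ≫ p)) ξ) hd2 with hdd2
    refine ⟨d2 ≫ muP p γ, ?_, ?_⟩
    · have h1 : d2 ≫ Tmap p ξ hslice = pullback.fst (pullback.snd p (γ ≫ p)) ξ := by
        apply pullback.hom_ext
        · simp [hdd2, Tmap]; erw [pullback.lift_fst, pullback.lift_fst]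
        · simp [hdd2, Tmap,
            ← pullback.condition (f := pullback.snd p (γ ≫ p)) (g := ξ)]; erw [pullback.lift_snd, pullback.lift_snd_assoc, pullback.condition]
      rw [Category.assoc, ← hassoc, ← Category.assoc, h1]
    · simp [muP, hdd2]; erw [pullback.lift_snd, pullback.lift_snd_assoc]
end

section
/- In a topos, consider a commutative diagram of two adjacent squares (1) and (2) sharing a common edge, where the bottom-left horizontal arrow is an epimorphism. If the outer rectangle (1)+(2) and the left square (1) are both pullbacks, then the right square (2) is a pullback. -/
open CategoryTheory Limits

namespace ToposCancelAux

open MonoidalCategory CartesianMonoidalCategory CartesianClosed MonoidalClosed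

variable {C : Type*} [Category C] [HasFiniteLimits C] [CartesianMonoidalCategory C]
  [MonoidalClosed C] (cls : _root_.Classifier C)

lemma mono_of_source_terminal {A : C} (f : ⊤_ C ⟶ A) : Mono f :=
  ⟨fun g h _ => terminal.hom_ext g h⟩

lemma comp_χ {U X : C} (m : U ⟶ X) (hm : Mono m) :
    m ≫ cls.χ m hm = terminal.from U ≫ cls.truth :=
  (cls.isPullback m hm).w

/-- A helper to build pullback squares whose second leg goes to the terminal object. -/
lemma isPullback_mk {M T O : C} (m : M ⟶ T) (c : T ⟶ O) (d : ⊤_ C ⟶ O)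
    (hm : Mono m) (w : m ≫ c = terminal.from M ≫ d)
    (hl : ∀ {S : C} (z : S ⟶ T), z ≫ c = terminal.from S ≫ d → ∃ l : S ⟶ M, l ≫ m = z) :
    IsPullback m (terminal.from M) c d := by
  have key : ∀ s : PullbackCone c d, s.fst ≫ c = terminal.from s.pt ≫ d := by
    intro s
    rw [s.condition]
    congr 1
    exact terminal.hom_ext _ _
  apply IsPullback.of_isLimit (c := PullbackCone.mk m (terminal.from M) w)
  refine PullbackCone.IsLimit.mk w
    (fun s => (hl s.fst (key s)).choose)
    (fun s => (hl s.fst (key s)).choose_spec)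
    (fun s => terminal.hom_ext _ _)
    (fun s m' h1 h2 => ?_)
  have h3 := (hl s.fst (key s)).choose_spec
  rw [← cancel_mono m]
  rw [h1, h3]

lemma section_of_χ_eq {E Y : C} (e : E ⟶ Y) (he : Mono e)
    (h : cls.χ e he = terminal.from Y ≫ cls.truth) : ∃ z : Y ⟶ E, z ≫ e = 𝟙 Y := by
  refine ⟨(cls.isPullback e he).lift (𝟙 Y) (terminal.from Y) ?_,
    (cls.isPullback e he).lift_fst _ _ _⟩
  rw [Category.id_comp, h]

/-- The "true ∧ true" point of `Ω ⊗ Ω`. -/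
noncomputable def tt : ⊤_ C ⟶ cls.Ω ⊗ cls.Ω := lift cls.truth cls.truth

/-- Internal conjunction. -/
noncomputable def and_ : cls.Ω ⊗ cls.Ω ⟶ cls.Ω :=
  cls.χ (tt cls) (mono_of_source_terminal _)

lemma isPullback_tt : IsPullback (tt cls) (terminal.from _) (and_ cls) cls.truth :=
  cls.isPullback (tt cls) (mono_of_source_terminal _)

/-- The internal order `≤` on `Ω`, as an equalizer of `∧` and `fst`. -/
noncomputable def leqι : equalizer (and_ cls) (fst cls.Ω cls.Ω) ⟶ cls.Ω ⊗ cls.Ω :=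
  equalizer.ι _ _

/-- Internal implication. -/
lemma leqι_mono : Mono (leqι cls) := equalizer.ι_mono

lemma leqι_cond : leqι cls ≫ and_ cls = leqι cls ≫ fst cls.Ω cls.Ω :=
  equalizer.condition _ _

/-- Internal implication. -/
noncomputable def imp : cls.Ω ⊗ cls.Ω ⟶ cls.Ω :=
  cls.χ (leqι cls) (leqι_mono cls)

/-- If `m` is the subobject classified by `p`, and `q` is true on `m`, then `p ∧ q = p`. -/
lemma and_eq_left {T M : C} {p q : T ⟶ cls.Ω} {m : M ⟶ T}
    (hpb : IsPullback m (terminal.from M) p cls.truth)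
    (hq : m ≫ q = terminal.from M ≫ cls.truth) :
    lift p q ≫ and_ cls = p := by
  have hm : Mono m := ⟨fun a b hab => hpb.hom_ext hab (terminal.hom_ext _ _)⟩
  have h1 : IsPullback m (terminal.from M) (lift p q) (tt cls) := by
    apply isPullback_mk _ _ _ hm
    · rw [comp_lift, hpb.w, hq, tt, comp_lift]
    · intro S z hz
      have hz1 : z ≫ p = terminal.from S ≫ cls.truth := by
        have := hz =≫ fst cls.Ω cls.Ω
        simpa [tt] using this
      exact ⟨hpb.lift z (terminal.from S) hz1, hpb.lift_fst _ _ _⟩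
  have h2 := h1.paste_vert (isPullback_tt cls)
  rw [terminal.hom_ext (terminal.from M ≫ terminal.from _) (terminal.from M)] at h2
  rw [cls.uniq m hm _ h2]
  exact (cls.uniq m hm p hpb).symm

/-- `⊤ ∧ q = q`. -/
lemma top_and {T : C} (q : T ⟶ cls.Ω) :
    lift (terminal.from T ≫ cls.truth) q ≫ and_ cls = q := by
  have hpb : IsPullback (pullback.fst q cls.truth) (terminal.from _) q cls.truth := by
    have h := IsPullback.of_hasPullback q cls.truth
    rwa [terminal.hom_ext (pullback.snd q cls.truth) (terminal.from _)] at h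
  have hm : Mono (pullback.fst q cls.truth) :=
    ⟨fun a b hab => hpb.hom_ext hab (terminal.hom_ext _ _)⟩
  have h1 : IsPullback (pullback.fst q cls.truth) (terminal.from _)
      (lift (terminal.from T ≫ cls.truth) q) (tt cls) := by
    apply isPullback_mk _ _ _ hm
    · rw [comp_lift, hpb.w, tt, comp_lift, ← Category.assoc,
        terminal.hom_ext (pullback.fst q cls.truth ≫ terminal.from T) (terminal.from _)]
    · intro S z hz
      have hz1 : z ≫ q = terminal.from S ≫ cls.truth := by
        have := hz =≫ snd cls.Ω cls.Ω
        simpa [tt] using this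
      exact ⟨hpb.lift z (terminal.from S) hz1, hpb.lift_fst _ _ _⟩
  have h2 := h1.paste_vert (isPullback_tt cls)
  rw [terminal.hom_ext (terminal.from _ ≫ terminal.from _) (terminal.from _)] at h2
  rw [cls.uniq _ hm _ h2]
  exact (cls.uniq _ hm q hpb).symm

/-- Implication introduction: if `q` holds on the subobject classified by `p`,
then `p ⇒ q` holds everywhere. -/
lemma imp_intro {T M : C} {p q : T ⟶ cls.Ω} {m : M ⟶ T}
    (hpb : IsPullback m (terminal.from M) p cls.truth)
    (hq : m ≫ q = terminal.from M ≫ cls.truth) :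
    lift p q ≫ imp cls = terminal.from T ≫ cls.truth := by
  have hand : lift p q ≫ and_ cls = lift p q ≫ fst cls.Ω cls.Ω := by
    rw [and_eq_left cls hpb hq, lift_fst]
  have hfac : equalizer.lift (lift p q) hand ≫ leqι cls = lift p q :=
    equalizer.lift_ι _ _
  rw [← hfac, Category.assoc, imp, comp_χ, ← Category.assoc,
    terminal.hom_ext (equalizer.lift (lift p q) hand ≫ terminal.from _) (terminal.from T)]

/-- Implication elimination with a true premise. -/
lemma imp_elim {T : C} {q : T ⟶ cls.Ω}
    (h : lift (terminal.from T ≫ cls.truth) q ≫ imp cls = terminal.from T ≫ cls.truth) :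
    q = terminal.from T ≫ cls.truth := by
  set lq := lift (terminal.from T ≫ cls.truth) q with hlq
  have hz : (cls.isPullback (leqι cls) (leqι_mono cls)).lift lq (terminal.from T)
      (by rw [← h, imp]) ≫ leqι cls = lq :=
    (cls.isPullback (leqι cls) (leqι_mono cls)).lift_fst _ _ _
  set z := (cls.isPullback (leqι cls) (leqι_mono cls)).lift lq (terminal.from T)
      (by rw [← h, imp])
  have h1 : lq ≫ and_ cls = lq ≫ fst cls.Ω cls.Ω := by
    rw [← hz, Category.assoc, Category.assoc, leqι_cond]
  rw [hlq] at h1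
  rw [top_and cls q, lift_fst] at h1
  exact h1

/-- The name of the always-true predicate on `Y`. -/
noncomputable def allTrue (Y : C) : ⊤_ C ⟶ (Y ⟹ cls.Ω) :=
  curry (terminal.from (Y ⊗ ⊤_ C) ≫ cls.truth)

/-- Internal universal quantification over `Y`. -/
noncomputable def forall_ (Y : C) : (Y ⟹ cls.Ω) ⟶ cls.Ω :=
  cls.χ (allTrue cls Y) (mono_of_source_terminal _)

lemma forall_intro {T Y : C} (n : Y ⊗ T ⟶ cls.Ω)
    (h : n = terminal.from _ ≫ cls.truth) :
    curry n ≫ forall_ cls Y = terminal.from T ≫ cls.truth := by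
  have h1 : curry n = terminal.from T ≫ allTrue cls Y := by
    rw [allTrue, ← curry_natural_left]
    congr 1
    rw [h, ← Category.assoc]
    congr 1
    exact terminal.hom_ext _ _
  rw [h1, Category.assoc, forall_, comp_χ, ← Category.assoc,
    terminal.hom_ext (terminal.from T ≫ terminal.from _) (terminal.from T)]

lemma forall_elim {T Y : C} (n : Y ⊗ T ⟶ cls.Ω)
    (h : curry n ≫ forall_ cls Y = terminal.from T ≫ cls.truth) :
    n = terminal.from _ ≫ cls.truth := by
  have hz : (cls.isPullback (allTrue cls Y) (mono_of_source_terminal _)).lift (curry n)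
      (terminal.from T) (by rw [← h, forall_]) ≫ allTrue cls Y = curry n :=
    (cls.isPullback (allTrue cls Y) (mono_of_source_terminal _)).lift_fst _ _ _
  set z := (cls.isPullback (allTrue cls Y) (mono_of_source_terminal _)).lift (curry n)
      (terminal.from T) (by rw [← h, forall_])
  have h1 : n = Y ◁ z ≫ (terminal.from (Y ⊗ ⊤_ C) ≫ cls.truth) := by
    rw [← uncurry_curry n, ← hz, uncurry_natural_left, allTrue, uncurry_curry]
  rw [h1, ← Category.assoc]
  congr 1
  exact terminal.hom_ext _ _

include cls in
/-- The key topos-theoretic fact: the pullback of an epimorphism is an epimorphism. -/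
lemma epi_of_isPullback_of_epi {X Y X' Y' : C} {t : X ⟶ Y} {u : X ⟶ X'} {v : Y ⟶ Y'}
    {b : X' ⟶ Y'} (hb : Epi b) (h : IsPullback t u v b) : Epi t := by
  constructor
  intro D x y hxy
  -- the equalizer of x and y
  set e : equalizer x y ⟶ Y := equalizer.ι x y with he'
  have he : Mono e := inferInstance
  set χe := cls.χ e he with hχe
  have ht₀ : equalizer.lift t hxy ≫ e = t := equalizer.lift_ι t hxy
  -- the graph of v
  set graph : Y ⟶ Y ⊗ Y' := lift (𝟙 Y) v with hgr
  have hgraph : Mono graph := ⟨fun a b hab => by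
    have := hab =≫ fst Y Y'
    simpa [hgr] using this⟩
  set ψ := cls.χ graph hgraph with hψ
  set θ : Y ⊗ Y' ⟶ cls.Ω := lift ψ (fst Y Y' ≫ χe) ≫ imp cls with hθ
  -- Claim (i): θ is true on Y ⊗ X'
  have key1 : (Y ◁ b) ≫ θ = terminal.from (Y ⊗ X') ≫ cls.truth := by
    set m := pullback.fst (Y ◁ b) graph with hm'
    set γ := pullback.snd (Y ◁ b) graph with hγ'
    have sq : IsPullback m γ (Y ◁ b) graph := IsPullback.of_hasPullback _ _
    have hpb : IsPullback m (terminal.from _) ((Y ◁ b) ≫ ψ) cls.truth := by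
      have hp := sq.flip.paste_horiz (cls.isPullback graph hgraph).flip
      rw [terminal.hom_ext (γ ≫ terminal.from Y) (terminal.from _)] at hp
      exact hp.flip
    have hmf : m ≫ fst Y X' = γ := by
      have := sq.w =≫ fst Y Y'
      simpa [hgr] using this
    have hms : γ ≫ v = (m ≫ snd Y X') ≫ b := by
      have := sq.w =≫ snd Y Y'
      simp only [Category.assoc, whiskerLeft_snd, lift_snd, hgr] at this ⊢
      rw [this]
    have htχ : t ≫ χe = terminal.from X ≫ cls.truth := by
      rw [← ht₀, Category.assoc, hχe, comp_χ, ← Category.assoc]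
      congr 1
      exact terminal.hom_ext _ _
    have hq : m ≫ (fst Y X' ≫ χe) = terminal.from _ ≫ cls.truth := by
      have hlt : h.lift γ (m ≫ snd Y X') hms ≫ t = γ := h.lift_fst _ _ _
      calc m ≫ (fst Y X' ≫ χe) = (m ≫ fst Y X') ≫ χe := (Category.assoc _ _ _).symm
        _ = (h.lift γ (m ≫ snd Y X') hms ≫ t) ≫ χe := by rw [hmf, hlt]
        _ = h.lift γ (m ≫ snd Y X') hms ≫ (t ≫ χe) := Category.assoc _ _ _
        _ = h.lift γ (m ≫ snd Y X') hms ≫ (terminal.from X ≫ cls.truth) := by rw [htχ]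
        _ = terminal.from _ ≫ cls.truth := by
            rw [← Category.assoc]
            congr 1
            exact terminal.hom_ext _ _
    have hcomp : (Y ◁ b) ≫ θ = lift ((Y ◁ b) ≫ ψ) (fst Y X' ≫ χe) ≫ imp cls := by
      have hwf : (Y ◁ b) ≫ (fst Y Y' ≫ χe) = fst Y X' ≫ χe := by
        rw [← Category.assoc, whiskerLeft_fst]
      rw [hθ, ← Category.assoc, comp_lift, hwf]
    rw [hcomp]
    exact imp_intro cls hpb hq
  -- Claim (ii): since b is epi, the universally quantified predicate is true on Y'
  have keyφ : curry θ ≫ forall_ cls Y = terminal.from Y' ≫ cls.truth := by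
    have h2 : b ≫ (curry θ ≫ forall_ cls Y) = b ≫ (terminal.from Y' ≫ cls.truth) := by
      rw [← Category.assoc, ← curry_natural_left, forall_intro cls _ key1, ← Category.assoc]
      congr 1
      exact terminal.hom_ext _ _
    exact (cancel_epi b).mp h2
  -- Claim (iii): pull back along v and evaluate at the diagonal
  have key3 : graph ≫ θ = terminal.from Y ≫ cls.truth := by
    have h3 : curry ((Y ◁ v) ≫ θ) ≫ forall_ cls Y = terminal.from Y ≫ cls.truth := by
      rw [curry_natural_left, Category.assoc, keyφ, ← Category.assoc]
      congr 1
      exact terminal.hom_ext _ _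
    have h4 := forall_elim cls _ h3
    have h5 : graph = lift (𝟙 Y) (𝟙 Y) ≫ (Y ◁ v) := by
      apply CartesianMonoidalCategory.hom_ext <;> simp [hgr]
    rw [h5, Category.assoc, h4, ← Category.assoc]
    congr 1
    exact terminal.hom_ext _ _
  -- extract that χe is true everywhere
  have hχtop : χe = terminal.from Y ≫ cls.truth := by
    apply imp_elim cls
    have h6 : lift (terminal.from Y ≫ cls.truth) χe = graph ≫ lift ψ (fst Y Y' ≫ χe) := by
      rw [comp_lift, hψ, comp_χ, ← Category.assoc]
      congr 2
      simp [hgr]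
    rw [h6, Category.assoc, ← hθ, key3]
  obtain ⟨z, hz⟩ := section_of_χ_eq cls e he hχtop
  calc x = (z ≫ e) ≫ x := by rw [hz, Category.id_comp]
    _ = z ≫ e ≫ y := by rw [Category.assoc, equalizer.condition]
    _ = y := by rw [← Category.assoc, hz, Category.id_comp]

include cls in
/-- A category with a subobject classifier is balanced. -/
lemma isIso_of_mono_of_epi {A B : C} (e : A ⟶ B) (hm : Mono e) (he : Epi e) : IsIso e := by
  have hχ : cls.χ e hm = terminal.from B ≫ cls.truth := by
    apply (cancel_epi e).mp
    rw [comp_χ, ← Category.assoc]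
    congr 1
    exact terminal.hom_ext _ _
  obtain ⟨z, hz⟩ := section_of_χ_eq cls e hm hχ
  refine ⟨z, ?_, hz⟩
  rw [← cancel_mono e, Category.assoc, hz, Category.comp_id, Category.id_comp]

end ToposCancelAux

open ToposCancelAux in
/-- in a topos, given two adjacent commuting squares `(1)` (left) and
`(2)` (right) whose common bottom-left edge is an epimorphism, if the outer rectangle
`(1)+(2)` and the left square `(1)` are pullbacks, then the right square `(2)` is a
pullback. -/
theorem pullback_cancel_of_epi
    {C : Type*} [Category C] [HasFiniteLimits C] [CartesianMonoidalCategory C]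
    [MonoidalClosed C] (cls : _root_.Classifier C)
    {X Y Z X' Y' Z' : C}
    (t₁ : X ⟶ Y) (t₂ : Y ⟶ Z) (u : X ⟶ X') (v : Y ⟶ Y') (w : Z ⟶ Z')
    (b₁ : X' ⟶ Y') (b₂ : Y' ⟶ Z')
    [Epi b₁]
    (h1 : IsPullback t₁ u v b₁)
    (h12 : IsPullback (t₁ ≫ t₂) u w (b₁ ≫ b₂)) :
    IsPullback t₂ v w b₂ := by
  have ht₁ : Epi t₁ := epi_of_isPullback_of_epi cls ‹Epi b₁› h1
  have comm2 : t₂ ≫ w = v ≫ b₂ := by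
    apply (cancel_epi t₁).mp
    rw [← Category.assoc, ← Category.assoc, h12.w, h1.w, Category.assoc]
  have pb : IsPullback (pullback.fst w b₂) (pullback.snd w b₂) w b₂ :=
    IsPullback.of_hasPullback w b₂
  have hk : (pullback.lift t₂ v comm2 : Y ⟶ pullback w b₂) ≫ pullback.fst w b₂ = t₂ :=
    pullback.lift_fst _ _ _
  have hk' : (pullback.lift t₂ v comm2 : Y ⟶ pullback w b₂) ≫ pullback.snd w b₂ = v :=
    pullback.lift_snd _ _ _
  set k : Y ⟶ pullback w b₂ := pullback.lift t₂ v comm2 with hkdef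
  -- k is a monomorphism
  have hmono : Mono k := by
    constructor
    intro T a b hab
    have hav : a ≫ v = b ≫ v := by
      rw [← hk', ← Category.assoc, ← Category.assoc, hab]
    have hat : a ≫ t₂ = b ≫ t₂ := by
      rw [← hk, ← Category.assoc, ← Category.assoc, hab]
    have sq : IsPullback (pullback.fst (a ≫ v) b₁) (pullback.snd (a ≫ v) b₁) (a ≫ v) b₁ :=
      IsPullback.of_hasPullback _ _
    have hπ : Epi (pullback.fst (a ≫ v) b₁) := epi_of_isPullback_of_epi cls ‹Epi b₁› sq
    set π := pullback.fst (a ≫ v) b₁ with hπ'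
    set σ := pullback.snd (a ≫ v) b₁ with hσ'
    have hw1 : (π ≫ a) ≫ v = σ ≫ b₁ := by rw [Category.assoc]; exact sq.w
    have hw2 : (π ≫ b) ≫ v = σ ≫ b₁ := by
      rw [Category.assoc, ← hav, ← Category.assoc]; exact hw1
    have hαβ : h1.lift (π ≫ a) σ hw1 = h1.lift (π ≫ b) σ hw2 := by
      apply h12.hom_ext
      · rw [← Category.assoc, ← Category.assoc, h1.lift_fst, h1.lift_fst,
          Category.assoc, Category.assoc, hat]
      · rw [h1.lift_snd, h1.lift_snd]
    have hπab : π ≫ a = π ≫ b := by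
      rw [← h1.lift_fst (π ≫ a) σ hw1, hαβ, h1.lift_fst]
    exact (cancel_epi π).mp hπab
  -- k is an epimorphism
  have hL : IsPullback (t₁ ≫ k) u (pullback.snd w b₂) b₁ := by
    apply IsPullback.of_right _ _ pb
    · have : (t₁ ≫ k) ≫ pullback.fst w b₂ = t₁ ≫ t₂ := by
        rw [Category.assoc, hk]
      rw [this]
      exact h12
    · rw [Category.assoc, hk']
      exact h1.w
  have hke : Epi (t₁ ≫ k) := epi_of_isPullback_of_epi cls ‹Epi b₁› hL
  have hkepi : Epi k := epi_of_epi t₁ k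
  have hiso : IsIso k := isIso_of_mono_of_epi cls k hmono hkepi
  exact IsPullback.of_iso_pullback ⟨comm2⟩ (asIso k) hk hk'
end

section
/- In a topos, let p : E → B, γ : C → E, and let (γ, ξ) be descent data for γ relative to p. Let c : C → H be the coequalizer of ξ and π₂^{p∘γ} : E×_B C → C, and let α : H → B be the unique map with α ∘ c = p ∘ γ. Then the square with top c, left γ, right α, bottom p is a pullback. -/
open CategoryTheory Limits

section Helpers

open MonoidalCategory CartesianMonoidalCategory MonoidalClosed

variable {C : Type*} [Category C]

section ClassifierLemmas

variable [HasTerminal C]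

/-- The classifying map of a pullback of a mono is the composite with the classifying map. -/
lemma Classifier.chi_comp (cls : _root_.Classifier C) {U Z Y W : C} (m : U ⟶ Z) (hm : Mono m)
    {f : Y ⟶ Z} {n : W ⟶ Y} (hn : Mono n) {q : W ⟶ U} (sq : IsPullback n q f m) :
    f ≫ cls.χ m hm = cls.χ n hn := by
  apply cls.uniq n hn
  have h := sq.paste_vert (cls.isPullback m hm)
  rwa [terminal.comp_from] at h

/-- Two mutually factoring monos have the same classifying map. -/
lemma Classifier.chi_congr (cls : _root_.Classifier C) {U U' Z : C} {m : U ⟶ Z} {m' : U' ⟶ Z}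
    (hm : Mono m) (hm' : Mono m') (i : U ⟶ U') (j : U' ⟶ U)
    (hi : i ≫ m' = m) (hj : j ≫ m = m') : cls.χ m hm = cls.χ m' hm' := by
  apply cls.uniq m' hm'
  have hji : j ≫ i = 𝟙 U' := by
    rw [← cancel_mono m', Category.assoc, hi, hj, Category.id_comp]
  have hij : i ≫ j = 𝟙 U := by
    rw [← cancel_mono m, Category.assoc, hj, hi, Category.id_comp]
  haveI : IsIso j := ⟨i, hji, hij⟩
  have s : IsPullback j (terminal.from U') (terminal.from U) (𝟙 (⊤_ C)) :=
    IsPullback.of_horiz_isIso ⟨by simp⟩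
  have h := s.paste_horiz (cls.isPullback m hm)
  rwa [hj, Category.id_comp] at h

end ClassifierLemmas

section DescentLemmas

variable [HasFiniteLimits C] [CartesianMonoidalCategory C] [MonoidalClosed C]
variable {E B X : C} (p : E ⟶ B) (γ : X ⟶ E)

/-- The pair `⟨ξ, π₂⟩` is jointly monic. -/
lemma descent_rel_mono (ξ : pullback p (γ ≫ p) ⟶ X)
    (hslice : ξ ≫ γ = pullback.fst p (γ ≫ p)) :
    Mono (CartesianMonoidalCategory.lift ξ (pullback.snd p (γ ≫ p))) := by
  constructor
  intro T a b h
  have h1 : a ≫ ξ = b ≫ ξ := by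
    have := congrArg (· ≫ fst X X) h
    simpa using this
  have h2 : a ≫ pullback.snd p (γ ≫ p) = b ≫ pullback.snd p (γ ≫ p) := by
    have := congrArg (· ≫ snd X X) h
    simpa using this
  refine pullback.hom_ext ?_ h2
  rw [← hslice, ← Category.assoc, ← Category.assoc, h1]

/-- The cocycle condition, in a convenient form: `ξ (e, ξ q) = ξ (e, π₂ q)`. -/
lemma descent_cocycle (ξ : pullback p (γ ≫ p) ⟶ X)
    (hslice : ξ ≫ γ = pullback.fst p (γ ≫ p))
    (hassoc : Tmap p ξ hslice ≫ ξ = muP p γ ≫ ξ)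
    {T : C} (e : T ⟶ E) (q : T ⟶ pullback p (γ ≫ p))
    (hpe : e ≫ p = q ≫ pullback.fst p (γ ≫ p) ≫ p)
    (h1 : e ≫ p = (q ≫ ξ) ≫ (γ ≫ p))
    (h2 : e ≫ p = (q ≫ pullback.snd p (γ ≫ p)) ≫ (γ ≫ p)) :
    pullback.lift e (q ≫ ξ) h1 ≫ ξ
      = pullback.lift e (q ≫ pullback.snd p (γ ≫ p)) h2 ≫ ξ := by
  have hw1 : pullback.lift e q hpe ≫ Tmap p ξ hslice = pullback.lift e (q ≫ ξ) h1 := by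
    apply pullback.hom_ext <;> simp [Tmap, pullback.lift_fst, pullback.lift_snd, pullback.lift_fst_assoc, pullback.lift_snd_assoc]
  have hw2 : pullback.lift e q hpe ≫ muP p γ
      = pullback.lift e (q ≫ pullback.snd p (γ ≫ p)) h2 := by
    apply pullback.hom_ext <;> simp [muP, pullback.lift_fst, pullback.lift_snd, pullback.lift_fst_assoc, pullback.lift_snd_assoc]
  rw [← hw1, ← hw2, Category.assoc, Category.assoc, hassoc]

/-- The classifying map of the relation coequalizes `X ◁ ξ` and `X ◁ π₂`. -/
lemma descent_chi_coequalizes (cls : _root_.Classifier C) (ξ : pullback p (γ ≫ p) ⟶ X)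
    (hslice : ξ ≫ γ = pullback.fst p (γ ≫ p))
    (hassoc : Tmap p ξ hslice ≫ ξ = muP p γ ≫ ξ)
    (hρ : Mono (CartesianMonoidalCategory.lift ξ (pullback.snd p (γ ≫ p)))) :
    (X ◁ ξ) ≫ cls.χ _ hρ = (X ◁ pullback.snd p (γ ≫ p)) ≫ cls.χ _ hρ := by
  haveI := hρ
  have hcond : pullback.fst p (γ ≫ p) ≫ p = pullback.snd p (γ ≫ p) ≫ (γ ≫ p) :=
    pullback.condition
  -- data of the pullback of ρ along `X ◁ π₂`  (the "A side")
  set aPr := pullback.fst (X ◁ pullback.snd p (γ ≫ p))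
    (CartesianMonoidalCategory.lift ξ (pullback.snd p (γ ≫ p))) with haPrdef
  set aR := pullback.snd (X ◁ pullback.snd p (γ ≫ p))
    (CartesianMonoidalCategory.lift ξ (pullback.snd p (γ ≫ p))) with haRdef
  have condA : aPr ≫ (X ◁ pullback.snd p (γ ≫ p))
      = aR ≫ CartesianMonoidalCategory.lift ξ (pullback.snd p (γ ≫ p)) := pullback.condition
  have hA1 : (aPr ≫ snd X (pullback p (γ ≫ p))) ≫ pullback.snd p (γ ≫ p)
      = aR ≫ pullback.snd p (γ ≫ p) := by
    have := congrArg (· ≫ snd X X) condA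
    simpa using this
  have hA2 : aPr ≫ fst X (pullback p (γ ≫ p)) = aR ≫ ξ := by
    have := congrArg (· ≫ fst X X) condA
    simpa using this
  have hppA : (aR ≫ pullback.fst p (γ ≫ p)) ≫ p
      = (aPr ≫ snd X (pullback p (γ ≫ p))) ≫ pullback.fst p (γ ≫ p) ≫ p := by
    simp only [Category.assoc]
    rw [hcond, reassoc_of% hA1]
  have hA1' : (aR ≫ pullback.fst p (γ ≫ p)) ≫ p
      = ((aPr ≫ snd X (pullback p (γ ≫ p))) ≫ ξ) ≫ (γ ≫ p) := by
    simp only [Category.assoc]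
    rw [reassoc_of% hslice]
    simpa only [Category.assoc] using hppA
  have hA2' : (aR ≫ pullback.fst p (γ ≫ p)) ≫ p
      = ((aPr ≫ snd X (pullback p (γ ≫ p))) ≫ pullback.snd p (γ ≫ p)) ≫ (γ ≫ p) := by
    simp only [Category.assoc]
    rw [← hcond]
    simpa only [Category.assoc] using hppA
  have hr'ξ : pullback.lift (aR ≫ pullback.fst p (γ ≫ p))
      ((aPr ≫ snd X (pullback p (γ ≫ p))) ≫ ξ) hA1' ≫ ξ = aR ≫ ξ := by
    rw [descent_cocycle p γ ξ hslice hassoc _ _ hppA hA1' hA2']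
    have heq : pullback.lift (aR ≫ pullback.fst p (γ ≫ p))
        ((aPr ≫ snd X (pullback p (γ ≫ p))) ≫ pullback.snd p (γ ≫ p)) hA2' = aR := by
      apply pullback.hom_ext
      · simp [pullback.lift_fst, pullback.lift_snd, pullback.lift_fst_assoc, pullback.lift_snd_assoc]
      · simpa [pullback.lift_fst, pullback.lift_snd, pullback.lift_fst_assoc, pullback.lift_snd_assoc] using hA1
    rw [heq]
  have bABcond : aPr ≫ (X ◁ ξ)
      = pullback.lift (aR ≫ pullback.fst p (γ ≫ p))
          ((aPr ≫ snd X (pullback p (γ ≫ p))) ≫ ξ) hA1'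
        ≫ CartesianMonoidalCategory.lift ξ (pullback.snd p (γ ≫ p)) := by
    apply CartesianMonoidalCategory.hom_ext
    · rw [Category.assoc, whiskerLeft_fst, hA2, Category.assoc, lift_fst, hr'ξ]
    · simp only [Category.assoc, whiskerLeft_snd, lift_snd, pullback.lift_snd_assoc,
        pullback.lift_snd]
  -- data of the pullback of ρ along `X ◁ ξ`  (the "B side")
  set bPr := pullback.fst (X ◁ ξ)
    (CartesianMonoidalCategory.lift ξ (pullback.snd p (γ ≫ p))) with hbPrdef
  set bR := pullback.snd (X ◁ ξ)
    (CartesianMonoidalCategory.lift ξ (pullback.snd p (γ ≫ p))) with hbRdef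
  have condB : bPr ≫ (X ◁ ξ)
      = bR ≫ CartesianMonoidalCategory.lift ξ (pullback.snd p (γ ≫ p)) := pullback.condition
  have hB1 : (bPr ≫ snd X (pullback p (γ ≫ p))) ≫ ξ = bR ≫ pullback.snd p (γ ≫ p) := by
    have := congrArg (· ≫ snd X X) condB
    simpa using this
  have hB2 : bPr ≫ fst X (pullback p (γ ≫ p)) = bR ≫ ξ := by
    have := congrArg (· ≫ fst X X) condB
    simpa using this
  have hppB : (bR ≫ pullback.fst p (γ ≫ p)) ≫ p
      = (bPr ≫ snd X (pullback p (γ ≫ p))) ≫ pullback.fst p (γ ≫ p) ≫ p := by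
    simp only [Category.assoc]
    conv_rhs => rw [← reassoc_of% hslice]
    conv_rhs => rw [reassoc_of% hB1]
    rw [hcond]
  have hB1' : (bR ≫ pullback.fst p (γ ≫ p)) ≫ p
      = ((bPr ≫ snd X (pullback p (γ ≫ p))) ≫ ξ) ≫ (γ ≫ p) := by
    simp only [Category.assoc]
    rw [reassoc_of% hslice]
    simpa only [Category.assoc] using hppB
  have hB2' : (bR ≫ pullback.fst p (γ ≫ p)) ≫ p
      = ((bPr ≫ snd X (pullback p (γ ≫ p))) ≫ pullback.snd p (γ ≫ p)) ≫ (γ ≫ p) := by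
    simp only [Category.assoc]
    rw [← hcond]
    simpa only [Category.assoc] using hppB
  have hr''ξ : bR ≫ ξ = pullback.lift (bR ≫ pullback.fst p (γ ≫ p))
      ((bPr ≫ snd X (pullback p (γ ≫ p))) ≫ pullback.snd p (γ ≫ p)) hB2' ≫ ξ := by
    rw [← descent_cocycle p γ ξ hslice hassoc _ _ hppB hB1' hB2']
    have heq : pullback.lift (bR ≫ pullback.fst p (γ ≫ p))
        ((bPr ≫ snd X (pullback p (γ ≫ p))) ≫ ξ) hB1' = bR := by
      apply pullback.hom_ext
      · simp [pullback.lift_fst, pullback.lift_snd, pullback.lift_fst_assoc, pullback.lift_snd_assoc]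
      · simpa [pullback.lift_fst, pullback.lift_snd, pullback.lift_fst_assoc, pullback.lift_snd_assoc] using hB1
    rw [heq]
  have bBAcond : bPr ≫ (X ◁ pullback.snd p (γ ≫ p))
      = pullback.lift (bR ≫ pullback.fst p (γ ≫ p))
          ((bPr ≫ snd X (pullback p (γ ≫ p))) ≫ pullback.snd p (γ ≫ p)) hB2'
        ≫ CartesianMonoidalCategory.lift ξ (pullback.snd p (γ ≫ p)) := by
    apply CartesianMonoidalCategory.hom_ext
    · rw [Category.assoc, whiskerLeft_fst, hB2, Category.assoc, lift_fst, hr''ξ]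
    · simp only [Category.assoc, whiskerLeft_snd, lift_snd, pullback.lift_snd_assoc,
        pullback.lift_snd]
  haveI hmb : Mono bPr := by rw [hbPrdef]; infer_instance
  haveI hma : Mono aPr := by rw [haPrdef]; infer_instance
  have hχ1 : (X ◁ ξ) ≫ cls.χ _ hρ = cls.χ bPr hmb :=
    cls.chi_comp _ hρ hmb (IsPullback.of_hasPullback (X ◁ ξ) _)
  have hχ2 : (X ◁ pullback.snd p (γ ≫ p)) ≫ cls.χ _ hρ = cls.χ aPr hma :=
    cls.chi_comp _ hρ hma (IsPullback.of_hasPullback (X ◁ pullback.snd p (γ ≫ p)) _)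
  rw [hχ1, hχ2]
  exact cls.chi_congr hmb hma (pullback.lift bPr _ bBAcond) (pullback.lift aPr _ bABcond)
    (by rw [pullback.lift_fst]) (by rw [pullback.lift_fst])

/-- `γ` and `c` are jointly monic. -/
lemma descent_joint_mono (cls : _root_.Classifier C) (ξ : pullback p (γ ≫ p) ⟶ X)
    (hslice : ξ ≫ γ = pullback.fst p (γ ≫ p))
    (hunit : etaP p γ ≫ ξ = 𝟙 X)
    (hassoc : Tmap p ξ hslice ≫ ξ = muP p γ ≫ ξ)
    {H : C} (c : X ⟶ H) (hw : ξ ≫ c = pullback.snd p (γ ≫ p) ≫ c)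
    (hc : IsColimit (Cofork.ofπ c hw))
    {T : C} (a b : T ⟶ X) (hγ : a ≫ γ = b ≫ γ) (hcc : a ≫ c = b ≫ c) : a = b := by
  have hρ : Mono (CartesianMonoidalCategory.lift ξ (pullback.snd p (γ ≫ p))) :=
    descent_rel_mono p γ ξ hslice
  set ρ := CartesianMonoidalCategory.lift ξ (pullback.snd p (γ ≫ p)) with hρdef
  set φ := cls.χ ρ hρ with hφdef
  have hd : ξ ≫ curry φ = pullback.snd p (γ ≫ p) ≫ curry φ := by
    rw [← curry_natural_left, ← curry_natural_left]
    exact congrArg curry (descent_chi_coequalizes p γ cls ξ hslice hassoc hρ)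
  have hπd : c ≫ Cofork.IsColimit.desc hc (curry φ) hd = curry φ := by
    simpa using Cofork.IsColimit.π_desc' hc (curry φ) hd
  have had : a ≫ curry φ = b ≫ curry φ := by
    rw [← hπd, ← Category.assoc, ← Category.assoc, hcc]
  have h2 : (X ◁ a) ≫ φ = (X ◁ b) ≫ φ :=
    curry_injective (by rw [curry_natural_left, curry_natural_left, had])
  have e1 : CartesianMonoidalCategory.lift a (𝟙 T) ≫ (X ◁ a) = CartesianMonoidalCategory.lift a a := by
    apply CartesianMonoidalCategory.hom_ext <;> simp
  have e2 : CartesianMonoidalCategory.lift a (𝟙 T) ≫ (X ◁ b) = CartesianMonoidalCategory.lift a b := by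
    apply CartesianMonoidalCategory.hom_ext <;> simp
  have h3 : CartesianMonoidalCategory.lift a a ≫ φ = CartesianMonoidalCategory.lift a b ≫ φ := by
    rw [← e1, ← e2, Category.assoc, Category.assoc, h2]
  have hr₀ : (a ≫ etaP p γ) ≫ ρ = CartesianMonoidalCategory.lift a a := by
    apply CartesianMonoidalCategory.hom_ext
    · rw [Category.assoc, hρdef, lift_fst, lift_fst, Category.assoc, hunit, Category.comp_id]
    · rw [Category.assoc, hρdef, lift_snd, lift_snd, Category.assoc]
      simp [etaP, pullback.lift_fst, pullback.lift_snd, pullback.lift_fst_assoc, pullback.lift_snd_assoc]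
  have h4 : CartesianMonoidalCategory.lift a b ≫ φ = terminal.from T ≫ cls.truth := by
    rw [← h3, ← hr₀, Category.assoc, hφdef, (cls.isPullback ρ hρ).w, ← Category.assoc,
      terminal.comp_from]
  have hr : (cls.isPullback ρ hρ).lift (CartesianMonoidalCategory.lift a b) (terminal.from T) h4 ≫ ρ
      = CartesianMonoidalCategory.lift a b := (cls.isPullback ρ hρ).lift_fst _ _ _
  set r := (cls.isPullback ρ hρ).lift (CartesianMonoidalCategory.lift a b) (terminal.from T) h4
    with hrdef
  have hrξ : r ≫ ξ = a := by
    have := congrArg (· ≫ fst X X) hr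
    simpa [hρdef] using this
  have hrs : r ≫ pullback.snd p (γ ≫ p) = b := by
    have := congrArg (· ≫ snd X X) hr
    simpa [hρdef] using this
  have hre : r = b ≫ etaP p γ := by
    apply pullback.hom_ext
    · have hfst : r ≫ pullback.fst p (γ ≫ p) = b ≫ γ := by
        rw [← hslice, ← Category.assoc, hrξ, hγ]
      rw [hfst]
      simp [etaP, pullback.lift_fst, pullback.lift_snd, pullback.lift_fst_assoc, pullback.lift_snd_assoc]
    · rw [hrs]
      simp [etaP, pullback.lift_fst, pullback.lift_snd, pullback.lift_fst_assoc, pullback.lift_snd_assoc]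
  rw [← hrξ, hre, Category.assoc, hunit, Category.comp_id]

end DescentLemmas

end Helpers

open MonoidalCategory CartesianMonoidalCategory MonoidalClosed

/-- in a topos, let `(γ, ξ)` be descent data for `γ : X ⟶ E` relative to
`p : E ⟶ B`, let `c : X ⟶ H` be the coequalizer of `ξ` and `π₂`, and let `α : H ⟶ B` be
the mediating map with `c ≫ α = γ ≫ p`.  Then the square with top `c`, left `γ`,
right `α` and bottom `p` is a pullback. -/
theorem descent_coequalizer_square_isPullback
    {C : Type*} [Category C] [HasFiniteLimits C] [CartesianMonoidalCategory C]
    [MonoidalClosed C] (cls : _root_.Classifier C)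
    {E B X H : C} (p : E ⟶ B) (γ : X ⟶ E)
    (ξ : pullback p (γ ≫ p) ⟶ X)
    (hslice : ξ ≫ γ = pullback.fst p (γ ≫ p))
    (hunit : etaP p γ ≫ ξ = 𝟙 X)
    (hassoc : Tmap p ξ hslice ≫ ξ = muP p γ ≫ ξ)
    (c : X ⟶ H) (hw : ξ ≫ c = pullback.snd p (γ ≫ p) ≫ c)
    (hc : IsColimit (Cofork.ofπ c hw))
    (α : H ⟶ B) (hα : c ≫ α = γ ≫ p) :
    IsPullback c γ α p := by
  have jm : ∀ {T : C} (a b : T ⟶ X), a ≫ γ = b ≫ γ → a ≫ c = b ≫ c → a = b :=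
    fun a b h1 h2 => descent_joint_mono p γ cls ξ hslice hunit hassoc c hw hc a b h1 h2
  have hQcond : pullback.fst p α ≫ p = pullback.snd p α ≫ α := pullback.condition
  -- the two monos into `E ⊗ H`
  have hjQ : Mono (CartesianMonoidalCategory.lift (pullback.fst p α) (pullback.snd p α)) := by
    constructor
    intro T a b h
    apply pullback.hom_ext
    · have := congrArg (· ≫ fst E H) h; simpa using this
    · have := congrArg (· ≫ snd E H) h; simpa using this
  have hG : Mono (CartesianMonoidalCategory.lift γ c) := by
    constructor
    intro T a b h
    apply jm
    · have := congrArg (· ≫ fst E H) h; simpa using this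
    · have := congrArg (· ≫ snd E H) h; simpa using this
  -- the pullback of jQ along `E ◁ c` (the "1 side")
  set f₁ := pullback.fst (E ◁ c)
    (CartesianMonoidalCategory.lift (pullback.fst p α) (pullback.snd p α)) with hf₁def
  set u₁ := pullback.snd (E ◁ c)
    (CartesianMonoidalCategory.lift (pullback.fst p α) (pullback.snd p α)) with hu₁def
  have cond₁ : f₁ ≫ (E ◁ c)
      = u₁ ≫ CartesianMonoidalCategory.lift (pullback.fst p α) (pullback.snd p α) :=
    pullback.condition
  have hc1 : f₁ ≫ fst E X = u₁ ≫ pullback.fst p α := by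
    have := congrArg (· ≫ fst E H) cond₁; simpa using this
  have hc2 : (f₁ ≫ snd E X) ≫ c = u₁ ≫ pullback.snd p α := by
    have := congrArg (· ≫ snd E H) cond₁; simpa using this
  have ρ₁cond : (f₁ ≫ fst E X) ≫ p = (f₁ ≫ snd E X) ≫ (γ ≫ p) := by
    rw [hc1, Category.assoc, hQcond, ← Category.assoc, ← hc2, Category.assoc, hα,
      ← Category.assoc]
  have b12cond : f₁ ≫ (E ◁ c)
      = (pullback.lift (f₁ ≫ fst E X) (f₁ ≫ snd E X) ρ₁cond ≫ ξ)
        ≫ CartesianMonoidalCategory.lift γ c := by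
    apply CartesianMonoidalCategory.hom_ext
    · simp only [Category.assoc, whiskerLeft_fst, lift_fst]
      rw [hslice, pullback.lift_fst]
    · simp only [Category.assoc, whiskerLeft_snd, lift_snd]
      rw [hw, pullback.lift_snd_assoc]
      simp only [Category.assoc]
  -- the pullback of G along `E ◁ c` (the "2 side")
  set f₂ := pullback.fst (E ◁ c) (CartesianMonoidalCategory.lift γ c) with hf₂def
  set x₂ := pullback.snd (E ◁ c) (CartesianMonoidalCategory.lift γ c) with hx₂def
  have cond₂ : f₂ ≫ (E ◁ c) = x₂ ≫ CartesianMonoidalCategory.lift γ c := pullback.condition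
  have hd1 : f₂ ≫ fst E X = x₂ ≫ γ := by
    have := congrArg (· ≫ fst E H) cond₂; simpa using this
  have hd2 : (f₂ ≫ snd E X) ≫ c = x₂ ≫ c := by
    have := congrArg (· ≫ snd E H) cond₂; simpa using this
  have ucond : (f₂ ≫ fst E X) ≫ p = ((f₂ ≫ snd E X) ≫ c) ≫ α := by
    rw [hd1, hd2, Category.assoc, Category.assoc, hα]
  have b21cond : f₂ ≫ (E ◁ c)
      = pullback.lift (f₂ ≫ fst E X) ((f₂ ≫ snd E X) ≫ c) ucond
        ≫ CartesianMonoidalCategory.lift (pullback.fst p α) (pullback.snd p α) := by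
    apply CartesianMonoidalCategory.hom_ext
    · simp only [Category.assoc, whiskerLeft_fst, lift_fst, pullback.lift_fst]
    · simp only [Category.assoc, whiskerLeft_snd, lift_snd, pullback.lift_snd]
  haveI := hjQ
  haveI := hG
  haveI hm₁ : Mono f₁ := by rw [hf₁def]; infer_instance
  haveI hm₂ : Mono f₂ := by rw [hf₂def]; infer_instance
  have hχ1 : (E ◁ c) ≫ cls.χ _ hjQ = cls.χ f₁ hm₁ :=
    cls.chi_comp _ hjQ hm₁ (IsPullback.of_hasPullback (E ◁ c) _)
  have hχ2 : (E ◁ c) ≫ cls.χ _ hG = cls.χ f₂ hm₂ :=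
    cls.chi_comp _ hG hm₂ (IsPullback.of_hasPullback (E ◁ c) _)
  have hcongr : cls.χ f₁ hm₁ = cls.χ f₂ hm₂ :=
    cls.chi_congr hm₁ hm₂
      (pullback.lift f₁ (pullback.lift (f₁ ≫ fst E X) (f₁ ≫ snd E X) ρ₁cond ≫ ξ) b12cond)
      (pullback.lift f₂ (pullback.lift (f₂ ≫ fst E X) ((f₂ ≫ snd E X) ≫ c) ucond) b21cond)
      (by rw [pullback.lift_fst]) (by rw [pullback.lift_fst])
  have heq : (E ◁ c) ≫ cls.χ _ hjQ = (E ◁ c) ≫ cls.χ _ hG := by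
    rw [hχ1, hχ2, hcongr]
  have hcur : c ≫ curry (cls.χ _ hjQ) = c ≫ curry (cls.χ _ hG) := by
    rw [← curry_natural_left, ← curry_natural_left]
    exact congrArg curry heq
  haveI hec : Epi c := ⟨fun u v h => Cofork.IsColimit.hom_ext hc (by simpa using h)⟩
  haveI h6 : Epi (equalizer.lift c hcur ≫ equalizer.ι (curry (cls.χ _ hjQ)) (curry (cls.χ _ hG)))
      := by rw [equalizer.lift_ι]; exact hec
  haveI h7 : Epi (equalizer.ι (curry (cls.χ _ hjQ)) (curry (cls.χ _ hG))) :=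
    epi_of_epi (equalizer.lift c hcur) _
  have hQG : curry (cls.χ _ hjQ) = curry (cls.χ _ hG) := by
    rw [← cancel_epi (equalizer.ι (curry (cls.χ _ hjQ)) (curry (cls.χ _ hG)))]
    exact equalizer.condition _ _
  have hχQG : cls.χ _ hjQ = cls.χ _ hG := curry_injective hQG
  have hjtr : CartesianMonoidalCategory.lift (pullback.fst p α) (pullback.snd p α) ≫ cls.χ _ hG
      = terminal.from _ ≫ cls.truth := by
    rw [← hχQG]
    exact (cls.isPullback _ hjQ).w
  set ψ := (cls.isPullback _ hG).lift
    (CartesianMonoidalCategory.lift (pullback.fst p α) (pullback.snd p α)) (terminal.from _) hjtr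
    with hψdef
  have hψ : ψ ≫ CartesianMonoidalCategory.lift γ c
      = CartesianMonoidalCategory.lift (pullback.fst p α) (pullback.snd p α) :=
    (cls.isPullback _ hG).lift_fst _ _ _
  have hψγ : ψ ≫ γ = pullback.fst p α := by
    have := congrArg (· ≫ fst E H) hψ; simpa using this
  have hψc : ψ ≫ c = pullback.snd p α := by
    have := congrArg (· ≫ snd E H) hψ; simpa using this
  refine IsPullback.of_isLimit' ⟨hα⟩ ?_
  refine PullbackCone.IsLimit.mk _
    (fun s => pullback.lift s.snd s.fst s.condition.symm ≫ ψ)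
    (fun s => ?_) (fun s => ?_) (fun s m hm1 hm2 => ?_)
  · simp only [Category.assoc, hψc, pullback.lift_snd]
  · simp only [Category.assoc, hψγ, pullback.lift_fst]
  · apply jm
    · simp only [Category.assoc, hψγ, pullback.lift_fst]
      exact hm2
    · simp only [Category.assoc, hψc, pullback.lift_snd]
      exact hm1
end

section
/- Let a commutative square in SET with a, r : L → (A, R) and ā, r̄ into S be given, with a rear pullback span over γ : I → L whose top arrows are a' and r', and canonical descent data ξ^τ (relative to a) and ξ^β (relative to r). If the pullback span is reachable (isomorphic to the image under the pullback functor of some σ over S), then ξ^τ and ξ^β are coherent: there exists descent data (γ, ξ) relative to s = ā∘r = r̄∘a with ξ ∘ u^{r̄}_γ = ξ^τ and ξ ∘ u^{ā}_γ = ξ^β. -/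
universe u

/-- `(W, p, q)` is a pullback of the cospan `(f, g)` in `SET`. -/
def IsSetPullback {X Y Z W : Type u} (f : X → Z) (g : Y → Z) (p : W → X) (q : W → Y) : Prop :=
  (∀ w, f (p w) = g (q w)) ∧ ∀ x y, f x = g y → ∃! w, p w = x ∧ q w = y

/-- Descent data in `SET` for `γ` relative to `p`, as a compatible family of maps
between the fibres of `γ`. -/
structure DescentFamily {E B C : Type u} (p : E → B) (γ : C → E) where
  map : ∀ (e e' : E), p e = p e' → {c : C // γ c = e} → {c : C // γ c = e'}
  refl : ∀ e (c : {c : C // γ c = e}), map e e rfl c = c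
  comp : ∀ (e e' e'' : E) (h : p e = p e') (h' : p e' = p e'') (c : {c : C // γ c = e}),
    map e' e'' h' (map e e' h c) = map e e'' (h.trans h') c

/-- in `SET`, for a commutative square `ā ∘ r = r̄ ∘ a = s` and a rear
pullback span over `γ : I → L` with top arrows `a'`, `r'` and canonical descent data
`ξᵗ` (relative to `a`) and `ξᵝ` (relative to `r`): if the span is reachable — i.e. it
completes to a cube over some `σ : K → S` whose front and right faces are pullbacks —
then `ξᵗ` and `ξᵝ` are coherent: there is descent data `ξ` relative to `s` whose
restrictions along `u^{r̄}` and `u^{ā}` are `ξᵗ` and `ξᵝ`. -/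
theorem reachable_implies_coherent
    {L A R S I J H : Type u}
    (a : L → A) (r : L → R) (rbar : A → S) (abar : R → S)
    (hcomm : ∀ l, rbar (a l) = abar (r l))
    (γ : I → L) (τ : J → A) (β : H → R) (a' : I → J) (r' : I → H)
    (hrearL : IsSetPullback a τ γ a')
    (hrearR : IsSetPullback r β γ r')
    (ξτ : DescentFamily a γ) (ξβ : DescentFamily r γ)
    (hτcan : ∀ (x x' : L) (h : a x = a x') (c : {c : I // γ c = x}),
      a' (ξτ.map x x' h c : I) = a' (c : I))
    (hβcan : ∀ (x x' : L) (h : r x = r x') (c : {c : I // γ c = x}),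
      r' (ξβ.map x x' h c : I) = r' (c : I))
    (hreach : ∃ (K : Type u) (σ : K → S) (rbar' : J → K) (abar' : H → K),
      (∀ i, rbar' (a' i) = abar' (r' i)) ∧
      IsSetPullback rbar σ τ rbar' ∧
      IsSetPullback abar σ β abar') :
    ∃ ξ : DescentFamily (fun l => rbar (a l)) γ,
      (∀ (x x' : L) (h : a x = a x'),
        ξ.map x x' (congrArg rbar h) = ξτ.map x x' h) ∧
      (∀ (x x' : L) (h : r x = r x'),
        ξ.map x x' (((hcomm x).trans (congrArg abar h)).trans (hcomm x').symm) =
          ξβ.map x x' h) := by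
  classical
  obtain ⟨K, σ, rbar', abar', hcube, hJ, hH⟩ := hreach
  -- the composite square is a pullback
  have hcomp : ∀ i : I, rbar (a (γ i)) = σ (rbar' (a' i)) := by
    intro i
    rw [hrearL.1 i]
    exact hJ.1 (a' i)
  have key : ∀ (x x' : L), rbar (a x) = rbar (a x') → ∀ (c : {c : I // γ c = x}),
      ∃! c' : {c' : I // γ c' = x'}, rbar' (a' (c' : I)) = rbar' (a' (c : I)) := by
    intro x x' h c
    have hσ : rbar (a x') = σ (rbar' (a' (c : I))) := by
      have h2 := hcomp (c : I)
      rw [c.2] at h2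
      rw [← h]; exact h2
    obtain ⟨j, ⟨hj1, hj2⟩, hjun⟩ := hJ.2 (a x') (rbar' (a' (c : I))) hσ
    obtain ⟨i, ⟨hi1, hi2⟩, hiun⟩ := hrearL.2 x' j hj1.symm
    refine ⟨⟨i, hi1⟩, by simp [hi2, hj2], ?_⟩
    rintro ⟨i', hi'1⟩ hi'2
    have hji' : a' i' = j := by
      refine hjun (a' i') ⟨?_, hi'2⟩
      rw [← hrearL.1 i', hi'1]
    exact Subtype.ext (hiun i' ⟨hi'1, hji'⟩)
  refine ⟨⟨fun x x' h c => (key x x' h c).choose, ?_, ?_⟩, ?_, ?_⟩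
  · intro x c
    exact ((key x x rfl c).choose_spec.2 c rfl).symm
  · intro x x' x'' h h' c
    refine (key x x'' (h.trans h') c).choose_spec.2 _ ?_
    exact ((key x' x'' h' _).choose_spec.1).trans ((key x x' h c).choose_spec.1)
  · intro x x' h
    funext c
    refine ((key x x' (congrArg rbar h) c).choose_spec.2 _ ?_).symm
    exact congrArg rbar' (hτcan x x' h c)
  · intro x x' h
    funext c
    refine ((key x x' (((hcomm x).trans (congrArg abar h)).trans (hcomm x').symm) c).choose_spec.2 _ ?_).symm
    exact (hcube _).trans ((congrArg abar' (hβcan x x' h c)).trans (hcube _).symm)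
end

section
/- In SET, given a pushout square of a : L → A and r : L → R with pushout object S, if ξ^τ (descent data relative to a) and ξ^β (descent data relative to r) for a common γ : I → L are coherent, then the coherence witness (γ, ξ) ∈ des(s) is unique. -/
universe u

/-- `(S, r̄, ā)` is a pushout of the span `(a, r)` in `SET`. -/
def IsSetPushout {L A R S : Type u} (a : L → A) (r : L → R)
    (rbar : A → S) (abar : R → S) : Prop :=
  (∀ l, rbar (a l) = abar (r l)) ∧
  ∀ {T : Type u} (f : A → T) (g : R → T), (∀ l, f (a l) = g (r l)) →
    ∃! h : S → T, (∀ x, h (rbar x) = f x) ∧ (∀ y, h (abar y) = g y)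

/-- in `SET`, if the bottom square is a pushout of `a : L → A` and
`r : L → R` with pushout object `S`, and `ξᵗ` (descent data relative to `a`) and `ξᵝ`
(relative to `r`) for a common `γ : I → L` are coherent, then the coherence witness —
descent data relative to `s = r̄ ∘ a = ā ∘ r` restricting to `ξᵗ` and `ξᵝ` — is unique. -/
theorem coherence_witness_unique
    {L A R S I : Type u}
    (a : L → A) (r : L → R) (rbar : A → S) (abar : R → S)
    (hpo : IsSetPushout a r rbar abar)
    (γ : I → L)
    (ξτ : DescentFamily a γ) (ξβ : DescentFamily r γ)
    (ξ₁ ξ₂ : DescentFamily (fun l => rbar (a l)) γ)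
    (h₁τ : ∀ (x x' : L) (h : a x = a x'),
      ξ₁.map x x' (congrArg rbar h) = ξτ.map x x' h)
    (h₁β : ∀ (x x' : L) (h : r x = r x'),
      ξ₁.map x x' (((hpo.1 x).trans (congrArg abar h)).trans (hpo.1 x').symm) =
        ξβ.map x x' h)
    (h₂τ : ∀ (x x' : L) (h : a x = a x'),
      ξ₂.map x x' (congrArg rbar h) = ξτ.map x x' h)
    (h₂β : ∀ (x x' : L) (h : r x = r x'),
      ξ₂.map x x' (((hpo.1 x).trans (congrArg abar h)).trans (hpo.1 x').symm) =
        ξβ.map x x' h) :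
    ξ₁ = ξ₂ := by
  obtain ⟨hcomm, huniv⟩ := hpo
  -- the generating relation of the pushout
  set r₀ : (A ⊕ R) → (A ⊕ R) → Prop :=
    fun u v => ∃ l, u = Sum.inl (a l) ∧ v = Sum.inr (r l) with hr₀
  -- from equality in S we obtain a zig-zag
  have hEqv : ∀ x x' : L, rbar (a x) = rbar (a x') →
      Relation.EqvGen r₀ (Sum.inl (a x)) (Sum.inl (a x')) := by
    obtain ⟨h, ⟨hrA, hrR⟩, -⟩ := huniv (fun x => Quot.mk r₀ (Sum.inl x))
      (fun y => Quot.mk r₀ (Sum.inr y)) (fun l => Quot.sound ⟨l, rfl, rfl⟩)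
    intro x x' hxx'
    have h2 := congrArg h hxx'
    rw [hrA, hrA] at h2
    exact Quot.eq.mp h2
  -- the invariant we carry along the zig-zag
  set W : (A ⊕ R) → L → Prop :=
    fun u x => u = Sum.inl (a x) ∨ u = Sum.inr (r x) with hW
  have main : ∀ u v, Relation.EqvGen r₀ u v →
      ((∃ x, W u x) ↔ (∃ x, W v x)) ∧
      ∀ x x', W u x → W v x' →
        rbar (a x) = rbar (a x') ∧
        ∀ h' : rbar (a x) = rbar (a x'), ξ₁.map x x' h' = ξ₂.map x x' h' := by
    intro u v huv
    induction huv with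
    | rel u v huv =>
      obtain ⟨l, hu, hv⟩ := huv
      constructor
      · exact ⟨fun _ => ⟨l, Or.inr hv⟩, fun _ => ⟨l, Or.inl hu⟩⟩
      · intro x x' hx hx'
        have hax : a x = a l := by
          rcases hx with h | h
          · exact Sum.inl.inj (h ▸ hu)
          · exact absurd (h ▸ hu) (by simp)
        have hrl : r l = r x' := by
          rcases hx' with h | h
          · exact absurd (h ▸ hv) (by simp)
          · exact (Sum.inr.inj (h ▸ hv)).symm
        have h1 : rbar (a x) = rbar (a l) := congrArg rbar hax
        have h2 : rbar (a l) = rbar (a x') :=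
          ((hcomm l).trans (congrArg abar hrl)).trans (hcomm x').symm
        refine ⟨h1.trans h2, fun h' => ?_⟩
        funext c
        have e1 : ξ₁.map x x' h' c = ξβ.map l x' hrl (ξτ.map x l hax c) := by
          rw [← h₁τ x l hax, ← h₁β l x' hrl]
          exact (ξ₁.comp x l x' h1 h2 c).symm
        have e2 : ξ₂.map x x' h' c = ξβ.map l x' hrl (ξτ.map x l hax c) := by
          rw [← h₂τ x l hax, ← h₂β l x' hrl]
          exact (ξ₂.comp x l x' h1 h2 c).symm
        rw [e1, e2]
    | refl u =>
      refine ⟨Iff.rfl, fun x x' hx hx' => ?_⟩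
      rcases hx with h | h <;> rcases hx' with h' | h'
      · have hax : a x = a x' := Sum.inl.inj (h ▸ h')
        refine ⟨congrArg rbar hax, fun hh => ?_⟩
        rw [show hh = congrArg rbar hax from rfl, h₁τ _ _ hax, h₂τ _ _ hax]
      · exact absurd (h ▸ h') (by simp)
      · exact absurd (h ▸ h') (by simp)
      · have hrx : r x = r x' := Sum.inr.inj (h ▸ h')
        refine ⟨((hcomm x).trans (congrArg abar hrx)).trans (hcomm x').symm,
          fun hh => ?_⟩
        rw [show hh = ((hcomm x).trans (congrArg abar hrx)).trans (hcomm x').symm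
          from rfl, h₁β _ _ hrx, h₂β _ _ hrx]
    | symm u v _ ih =>
      refine ⟨ih.1.symm, fun x x' hx hx' => ?_⟩
      obtain ⟨hs, hmaps⟩ := ih.2 x' x hx' hx
      refine ⟨hs.symm, fun h' => ?_⟩
      funext c
      have key : ∀ (ξ : DescentFamily (fun l => rbar (a l)) γ) (d),
          ξ.map x' x h'.symm (ξ.map x x' h' d) = d := fun ξ d => by
        have := ξ.comp x x' x h' h'.symm d
        rw [show (h'.trans h'.symm) = rfl from rfl] at this
        rw [this, ξ.refl]
      have key' : ∀ (ξ : DescentFamily (fun l => rbar (a l)) γ) (d),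
          ξ.map x x' h' (ξ.map x' x h'.symm d) = d := fun ξ d => by
        have := ξ.comp x' x x' h'.symm h' d
        rw [show (h'.symm.trans h') = rfl from rfl] at this
        rw [this, ξ.refl]
      calc ξ₁.map x x' h' c
          = ξ₂.map x x' h' (ξ₂.map x' x h'.symm (ξ₁.map x x' h' c)) :=
            (key' ξ₂ _).symm
        _ = ξ₂.map x x' h' (ξ₁.map x' x h'.symm (ξ₁.map x x' h' c)) := by
            rw [hmaps h'.symm]
        _ = ξ₂.map x x' h' c := by rw [key ξ₁]
    | trans u w v _ _ ih1 ih2 =>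
      refine ⟨ih1.1.trans ih2.1, fun x x' hx hx' => ?_⟩
      obtain ⟨y, hy⟩ := ih1.1.mp ⟨x, hx⟩
      obtain ⟨hs1, hm1⟩ := ih1.2 x y hx hy
      obtain ⟨hs2, hm2⟩ := ih2.2 y x' hy hx'
      refine ⟨hs1.trans hs2, fun h' => ?_⟩
      funext c
      have e1 : ξ₁.map x x' h' c = ξ₁.map y x' hs2 (ξ₁.map x y hs1 c) :=
        (ξ₁.comp x y x' hs1 hs2 c).symm
      have e2 : ξ₂.map x x' h' c = ξ₂.map y x' hs2 (ξ₂.map x y hs1 c) :=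
        (ξ₂.comp x y x' hs1 hs2 c).symm
      rw [e1, e2, hm1 hs1, hm2 hs2]
  have key : ∀ (x x' : L) (h : rbar (a x) = rbar (a x')),
      ξ₁.map x x' h = ξ₂.map x x' h := by
    intro x x' h
    exact ((main _ _ (hEqv x x' h)).2 x x' (Or.inl rfl) (Or.inl rfl)).2 h
  have hm : ξ₁.map = ξ₂.map := by
    funext x x' h
    exact key x x' h
  cases ξ₁; cases ξ₂
  cases hm
  rfl
end

section
/- Every domain cycle of a pair of maps a, r : L → A, R possesses a proper subcycle: a domain cycle of length at most that of the original, all of whose elements are pairwise distinct and form a subset of the elements of the original cycle. -/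
/-- A domain cycle of `a` and `r`: a sequence `x₀, …, x_{2k+1}` (indexed cyclically)
with consecutive elements distinct, `a (x_{2i}) = a (x_{2i+1})` and
`r (x_{2i+1}) = r (x_{2i+2})` (indices mod `2k+2`). -/
def IsDomainCycle {L A R : Type*} (a : L → A) (r : L → R) (k : ℕ)
    (x : ZMod (2 * k + 2) → L) : Prop :=
  (∀ j : ZMod (2 * k + 2), x j ≠ x (j + 1)) ∧
  (∀ i : ℕ, i ≤ k →
    a (x ((2 * i : ℕ) : ZMod (2 * k + 2))) = a (x ((2 * i + 1 : ℕ) : ZMod (2 * k + 2)))) ∧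
  (∀ i : ℕ, i ≤ k →
    r (x ((2 * i + 1 : ℕ) : ZMod (2 * k + 2))) = r (x ((2 * i + 2 : ℕ) : ZMod (2 * k + 2))))

section DomainCycleAux

variable {L A R : Type*} {a : L → A} {r : L → R}

private lemma dc_ne {k : ℕ} {x : ZMod (2 * k + 2) → L}
    (hx : IsDomainCycle a r k x) (j : ℕ) :
    x ((j : ℕ) : ZMod (2 * k + 2)) ≠ x ((j + 1 : ℕ) : ZMod (2 * k + 2)) := by
  have := hx.1 ((j : ℕ) : ZMod (2 * k + 2))
  simpa [Nat.cast_add] using this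

private lemma dc_edge_a {k : ℕ} {x : ZMod (2 * k + 2) → L}
    (hx : IsDomainCycle a r k x) {j : ℕ} (hj : j % 2 = 0) :
    a (x ((j : ℕ) : ZMod (2 * k + 2))) = a (x ((j + 1 : ℕ) : ZMod (2 * k + 2))) := by
  obtain ⟨-, h2, -⟩ := hx
  have hlt : j % (2 * k + 2) < 2 * k + 2 := Nat.mod_lt _ (by omega)
  have hmod2 : j % (2 * k + 2) % 2 = j % 2 := Nat.mod_mod_of_dvd _ ⟨k + 1, by ring⟩
  set i := j % (2 * k + 2) / 2 with hi
  have h2i : 2 * i = j % (2 * k + 2) := by omega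
  have hik : i ≤ k := by omega
  have e1 : ((2 * i : ℕ) : ZMod (2 * k + 2)) = ((j : ℕ) : ZMod (2 * k + 2)) := by
    rw [h2i, ZMod.natCast_mod]
  have e2 : ((2 * i + 1 : ℕ) : ZMod (2 * k + 2)) = ((j + 1 : ℕ) : ZMod (2 * k + 2)) := by
    rw [Nat.cast_add, Nat.cast_add, e1]
  rw [← e1, ← e2]
  exact h2 i hik

private lemma dc_edge_r {k : ℕ} {x : ZMod (2 * k + 2) → L}
    (hx : IsDomainCycle a r k x) {j : ℕ} (hj : j % 2 = 1) :
    r (x ((j : ℕ) : ZMod (2 * k + 2))) = r (x ((j + 1 : ℕ) : ZMod (2 * k + 2))) := by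
  obtain ⟨-, -, h3⟩ := hx
  have hlt : j % (2 * k + 2) < 2 * k + 2 := Nat.mod_lt _ (by omega)
  have hmod2 : j % (2 * k + 2) % 2 = j % 2 := Nat.mod_mod_of_dvd _ ⟨k + 1, by ring⟩
  set i := j % (2 * k + 2) / 2 with hi
  have h2i : 2 * i + 1 = j % (2 * k + 2) := by omega
  have hik : i ≤ k := by omega
  have e1 : ((2 * i + 1 : ℕ) : ZMod (2 * k + 2)) = ((j : ℕ) : ZMod (2 * k + 2)) := by
    rw [h2i, ZMod.natCast_mod]
  have e2 : ((2 * i + 2 : ℕ) : ZMod (2 * k + 2)) = ((j + 1 : ℕ) : ZMod (2 * k + 2)) := by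
    have h22 : (2 * i + 2 : ℕ) = (2 * i + 1) + 1 := by omega
    rw [h22, Nat.cast_add (2 * i + 1) 1, Nat.cast_add j 1, e1]
  rw [← e1, ← e2]
  exact h3 i hik

private lemma dc_template {k : ℕ} {x : ZMod (2 * k + 2) → L}
    (hx : IsDomainCycle a r k x) (k' : ℕ) (s : ℕ) (hs : s % 2 = 0)
    (hr : r (x ((s + (2 * k' + 1) : ℕ) : ZMod (2 * k + 2))) =
          r (x ((s : ℕ) : ZMod (2 * k + 2))))
    (hne : x ((s + (2 * k' + 1) : ℕ) : ZMod (2 * k + 2)) ≠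
           x ((s : ℕ) : ZMod (2 * k + 2))) :
    IsDomainCycle a r k'
      (fun t : ZMod (2 * k' + 2) => x ((s + t.val : ℕ) : ZMod (2 * k + 2))) := by
  haveI : NeZero (2 * k' + 2) := ⟨by omega⟩
  refine ⟨?_, ?_, ?_⟩
  · intro t
    have htlt : t.val < 2 * k' + 2 := ZMod.val_lt t
    by_cases h : t.val + 1 < 2 * k' + 2
    · have hv : (t + 1).val = t.val + 1 := by
        have ht1 : t + 1 = ((t.val + 1 : ℕ) : ZMod (2 * k' + 2)) := by
          rw [Nat.cast_add, ZMod.natCast_zmod_val, Nat.cast_one]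
        rw [ht1, ZMod.val_natCast_of_lt h]
      simp only [hv]
      have e : s + (t.val + 1) = (s + t.val) + 1 := by omega
      rw [e]
      exact dc_ne hx (s + t.val)
    · have htv : t.val = 2 * k' + 1 := by omega
      have hv : (t + 1).val = 0 := by
        have ht1 : t + 1 = ((t.val + 1 : ℕ) : ZMod (2 * k' + 2)) := by
          rw [Nat.cast_add, ZMod.natCast_zmod_val, Nat.cast_one]
        rw [ht1, htv]
        norm_num [ZMod.natCast_self]
      simp only [hv, htv, Nat.add_zero]
      exact hne
  · intro i hik
    have e1 : ((2 * i : ℕ) : ZMod (2 * k' + 2)).val = 2 * i :=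
      ZMod.val_natCast_of_lt (by omega)
    have e2 : ((2 * i + 1 : ℕ) : ZMod (2 * k' + 2)).val = 2 * i + 1 :=
      ZMod.val_natCast_of_lt (by omega)
    simp only [e1, e2]
    have e : s + (2 * i + 1) = (s + 2 * i) + 1 := by omega
    rw [e]
    apply dc_edge_a hx
    omega
  · intro i hik
    have e1 : ((2 * i + 1 : ℕ) : ZMod (2 * k' + 2)).val = 2 * i + 1 :=
      ZMod.val_natCast_of_lt (by omega)
    simp only [e1]
    by_cases h : i < k'
    · have e2 : ((2 * i + 2 : ℕ) : ZMod (2 * k' + 2)).val = 2 * i + 2 :=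
        ZMod.val_natCast_of_lt (by omega)
      simp only [e2]
      have e : s + (2 * i + 2) = (s + (2 * i + 1)) + 1 := by omega
      rw [e]
      apply dc_edge_r hx
      omega
    · have hik' : i = k' := by omega
      have e2 : ((2 * k' + 2 : ℕ) : ZMod (2 * k' + 2)).val = 0 := by
        rw [ZMod.natCast_self, ZMod.val_zero]
      simp only [hik', e2, Nat.add_zero]
      exact hr

private lemma dc_rotated {k : ℕ} {x : ZMod (2 * k + 2) → L}
    (hx : IsDomainCycle a r k x) (k' : ℕ) (s : ℕ) (hs : s % 2 = 0)
    (ha : a (x ((s + (2 * k' + 2) : ℕ) : ZMod (2 * k + 2))) =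
          a (x ((s + 1 : ℕ) : ZMod (2 * k + 2))))
    (hne : x ((s + (2 * k' + 2) : ℕ) : ZMod (2 * k + 2)) ≠
           x ((s + 1 : ℕ) : ZMod (2 * k + 2))) :
    IsDomainCycle a r k'
      (fun t : ZMod (2 * k' + 2) =>
        if t.val = 0 then x ((s + (2 * k' + 2) : ℕ) : ZMod (2 * k + 2))
        else x ((s + t.val : ℕ) : ZMod (2 * k + 2))) := by
  haveI : NeZero (2 * k' + 2) := ⟨by omega⟩
  refine ⟨?_, ?_, ?_⟩
  · intro t
    have htlt : t.val < 2 * k' + 2 := ZMod.val_lt t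
    by_cases h : t.val + 1 < 2 * k' + 2
    · have hv : (t + 1).val = t.val + 1 := by
        have ht1 : t + 1 = ((t.val + 1 : ℕ) : ZMod (2 * k' + 2)) := by
          rw [Nat.cast_add, ZMod.natCast_zmod_val, Nat.cast_one]
        rw [ht1, ZMod.val_natCast_of_lt h]
      by_cases h0 : t.val = 0
      · simp only [hv, h0, if_pos rfl, Nat.add_eq, if_neg (by omega : ¬(0 + 1 = 0))]
        simpa using hne
      · simp only [hv, if_neg h0, if_neg (by omega : ¬(t.val + 1 = 0))]
        have e : s + (t.val + 1) = (s + t.val) + 1 := by omega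
        rw [e]
        exact dc_ne hx (s + t.val)
    · have htv : t.val = 2 * k' + 1 := by omega
      have hv : (t + 1).val = 0 := by
        have ht1 : t + 1 = ((t.val + 1 : ℕ) : ZMod (2 * k' + 2)) := by
          rw [Nat.cast_add, ZMod.natCast_zmod_val, Nat.cast_one]
        rw [ht1, htv]
        norm_num [ZMod.natCast_self]
      simp only [hv, htv, if_pos rfl, if_neg (by omega : ¬(2 * k' + 1 = 0))]
      have e : s + (2 * k' + 2) = (s + (2 * k' + 1)) + 1 := by omega
      rw [e]
      exact dc_ne hx (s + (2 * k' + 1))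
  · intro i hik
    have e1 : ((2 * i : ℕ) : ZMod (2 * k' + 2)).val = 2 * i :=
      ZMod.val_natCast_of_lt (by omega)
    have e2 : ((2 * i + 1 : ℕ) : ZMod (2 * k' + 2)).val = 2 * i + 1 :=
      ZMod.val_natCast_of_lt (by omega)
    simp only [e1, e2, if_neg (by omega : ¬(2 * i + 1 = 0))]
    by_cases h0 : i = 0
    · subst h0
      simp only [Nat.mul_zero, if_pos rfl]
      simpa using ha
    · rw [if_neg (by omega : ¬(2 * i = 0))]
      have e : s + (2 * i + 1) = (s + 2 * i) + 1 := by omega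
      rw [e]
      apply dc_edge_a hx
      omega
  · intro i hik
    have e1 : ((2 * i + 1 : ℕ) : ZMod (2 * k' + 2)).val = 2 * i + 1 :=
      ZMod.val_natCast_of_lt (by omega)
    simp only [e1, if_neg (by omega : ¬(2 * i + 1 = 0))]
    by_cases h : i < k'
    · have e2 : ((2 * i + 2 : ℕ) : ZMod (2 * k' + 2)).val = 2 * i + 2 :=
        ZMod.val_natCast_of_lt (by omega)
      simp only [e2, if_neg (by omega : ¬(2 * i + 2 = 0))]
      have e : s + (2 * i + 2) = (s + (2 * i + 1)) + 1 := by omega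
      rw [e]
      apply dc_edge_r hx
      omega
    · have hik' : i = k' := by omega
      have e2 : ((2 * k' + 2 : ℕ) : ZMod (2 * k' + 2)).val = 0 := by
        rw [ZMod.natCast_self, ZMod.val_zero]
      simp only [hik', e2, if_pos rfl]
      have e : s + (2 * k' + 2) = (s + (2 * k' + 1)) + 1 := by omega
      rw [e]
      apply dc_edge_r hx
      omega

private lemma dc_collision {k : ℕ} {x : ZMod (2 * k + 2) → L}
    (hx : IsDomainCycle a r k x) :
    ∀ d u v : ℕ, u < v → v - u = d → d < 2 * k + 2 →
      x ((u : ℕ) : ZMod (2 * k + 2)) = x ((v : ℕ) : ZMod (2 * k + 2)) →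
    ∃ k'' : ℕ, k'' < k ∧ ∃ x'' : ZMod (2 * k'' + 2) → L,
      IsDomainCycle a r k'' x'' ∧ Set.range x'' ⊆ Set.range x := by
  intro d
  induction d using Nat.strong_induction_on with
  | _ d ih =>
  intro u v huv hd hdn hcol
  rcases Nat.lt_or_ge d 2 with hd2 | hd2
  · -- d = 1 : contradiction with adjacent distinctness
    have hd1 : d = 1 := by omega
    have hv1 : v = u + 1 := by omega
    exact absurd (hv1 ▸ hcol) (dc_ne hx u)
  rcases Nat.even_or_odd d with hde | hdo
  · -- d even
    have hd2' : d % 2 = 0 := Nat.even_iff.mp hde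
    set k'' : ℕ := d / 2 - 1 with hk''
    have hmd : 2 * k'' + 2 = d := by omega
    rcases Nat.even_or_odd u with hue | huo
    · -- u even, cycle x_u, ..., x_{v-1}
      have hue' : u % 2 = 0 := Nat.even_iff.mp hue
      by_cases hcc : x ((v - 1 : ℕ) : ZMod (2 * k + 2)) = x ((u : ℕ) : ZMod (2 * k + 2))
      · exact ih (d - 1) (by omega) u (v - 1) (by omega) (by omega) (by omega) hcc.symm
      · refine ⟨k'', by omega, _, dc_template hx k'' u (by omega) ?_ ?_, ?_⟩
        · have e : u + (2 * k'' + 1) = v - 1 := by omega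
          rw [e]
          have e2 : (v - 1) + 1 = v := by omega
          calc r (x ((v - 1 : ℕ) : ZMod (2 * k + 2)))
              = r (x (((v - 1) + 1 : ℕ) : ZMod (2 * k + 2))) := dc_edge_r hx (by omega)
            _ = r (x ((u : ℕ) : ZMod (2 * k + 2))) := by rw [e2, ← hcol]
        · have e : u + (2 * k'' + 1) = v - 1 := by omega
          rw [e]; exact hcc
        · rintro y ⟨t, rfl⟩; exact ⟨_, rfl⟩
    · -- u odd, cycle x_{u+1}, ..., x_v
      have huo' : u % 2 = 1 := Nat.odd_iff.mp huo
      by_cases hcc : x ((v : ℕ) : ZMod (2 * k + 2)) = x ((u + 1 : ℕ) : ZMod (2 * k + 2))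
      · exact ih (d - 1) (by omega) (u + 1) v (by omega) (by omega) (by omega) hcc.symm
      · refine ⟨k'', by omega, _, dc_template hx k'' (u + 1) (by omega) ?_ ?_, ?_⟩
        · have e : (u + 1) + (2 * k'' + 1) = v := by omega
          rw [e]
          calc r (x ((v : ℕ) : ZMod (2 * k + 2)))
              = r (x ((u : ℕ) : ZMod (2 * k + 2))) := by rw [← hcol]
            _ = r (x ((u + 1 : ℕ) : ZMod (2 * k + 2))) := dc_edge_r hx (by omega)
        · have e : (u + 1) + (2 * k'' + 1) = v := by omega
          rw [e]; exact hcc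
        · rintro y ⟨t, rfl⟩; exact ⟨_, rfl⟩
  · -- d odd, d ≥ 3
    have hd2' : d % 2 = 1 := Nat.odd_iff.mp hdo
    set k'' : ℕ := (d - 1) / 2 - 1 with hk''
    have hmd : 2 * k'' + 2 = d - 1 := by omega
    by_cases hcc : x ((v - 1 : ℕ) : ZMod (2 * k + 2)) = x ((u + 1 : ℕ) : ZMod (2 * k + 2))
    · exact ih (d - 2) (by omega) (u + 1) (v - 1) (by omega) (by omega) (by omega) hcc.symm
    rcases Nat.even_or_odd u with hue | huo
    · -- u even, v odd : rotated cycle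
      have hue' : u % 2 = 0 := Nat.even_iff.mp hue
      refine ⟨k'', by omega, _, dc_rotated hx k'' u (by omega) ?_ ?_, ?_⟩
      · have e : u + (2 * k'' + 2) = v - 1 := by omega
        rw [e]
        have e2 : (v - 1) + 1 = v := by omega
        calc a (x ((v - 1 : ℕ) : ZMod (2 * k + 2)))
            = a (x (((v - 1) + 1 : ℕ) : ZMod (2 * k + 2))) := dc_edge_a hx (by omega)
          _ = a (x ((u : ℕ) : ZMod (2 * k + 2))) := by rw [e2, ← hcol]
          _ = a (x ((u + 1 : ℕ) : ZMod (2 * k + 2))) := dc_edge_a hx (by omega)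
      · have e : u + (2 * k'' + 2) = v - 1 := by omega
        rw [e]; exact hcc
      · rintro y ⟨t, rfl⟩
        dsimp only
        split <;> exact ⟨_, rfl⟩
    · -- u odd, v even : cycle x_{u+1}, ..., x_{v-1}
      have huo' : u % 2 = 1 := Nat.odd_iff.mp huo
      refine ⟨k'', by omega, _, dc_template hx k'' (u + 1) (by omega) ?_ ?_, ?_⟩
      · have e : (u + 1) + (2 * k'' + 1) = v - 1 := by omega
        rw [e]
        have e2 : (v - 1) + 1 = v := by omega
        calc r (x ((v - 1 : ℕ) : ZMod (2 * k + 2)))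
            = r (x (((v - 1) + 1 : ℕ) : ZMod (2 * k + 2))) := dc_edge_r hx (by omega)
          _ = r (x ((u : ℕ) : ZMod (2 * k + 2))) := by rw [e2, ← hcol]
          _ = r (x ((u + 1 : ℕ) : ZMod (2 * k + 2))) := dc_edge_r hx (by omega)
      · have e : (u + 1) + (2 * k'' + 1) = v - 1 := by omega
        rw [e]; exact hcc
      · rintro y ⟨t, rfl⟩; exact ⟨_, rfl⟩

end DomainCycleAux

/-- every domain cycle possesses a proper subcycle: a domain cycle of
length at most the original one, all of whose elements are pairwise distinct and form
a subset of the elements of the original cycle. -/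
theorem domain_cycle_has_proper_subcycle {L A R : Type*} (a : L → A) (r : L → R)
    (k : ℕ) (x : ZMod (2 * k + 2) → L) (hx : IsDomainCycle a r k x) :
    ∃ (k' : ℕ), k' ≤ k ∧ ∃ x' : ZMod (2 * k' + 2) → L,
      IsDomainCycle a r k' x' ∧ Function.Injective x' ∧
      Set.range x' ⊆ Set.range x := by
  induction k using Nat.strong_induction_on with
  | _ k ih =>
  by_cases hinj : Function.Injective x
  · exact ⟨k, le_refl k, x, hx, hinj, subset_rfl⟩
  · rw [Function.not_injective_iff] at hinj
    obtain ⟨t₁, t₂, heq, hne⟩ := hinj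
    haveI : NeZero (2 * k + 2) := ⟨by omega⟩
    have hcast : ∀ t : ZMod (2 * k + 2), ((t.val : ℕ) : ZMod (2 * k + 2)) = t :=
      fun t => ZMod.natCast_zmod_val t
    have hvne : t₁.val ≠ t₂.val := by
      intro h
      exact hne (by rw [← hcast t₁, ← hcast t₂, h])
    have key : ∀ u v : ZMod (2 * k + 2), u.val < v.val → x u = x v →
        ∃ k'' : ℕ, k'' < k ∧ ∃ x'' : ZMod (2 * k'' + 2) → L,
          IsDomainCycle a r k'' x'' ∧ Set.range x'' ⊆ Set.range x := by
      intro u v hlt hcol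
      have hvlt : v.val < 2 * k + 2 := ZMod.val_lt v
      exact dc_collision hx (v.val - u.val) u.val v.val hlt rfl (by omega)
        (by rw [hcast u, hcast v]; exact hcol)
    have main : ∃ k'' : ℕ, k'' < k ∧ ∃ x'' : ZMod (2 * k'' + 2) → L,
        IsDomainCycle a r k'' x'' ∧ Set.range x'' ⊆ Set.range x := by
      rcases hvne.lt_or_gt with h | h
      · exact key t₁ t₂ h heq
      · exact key t₂ t₁ h heq.symm
    obtain ⟨k'', hk'', x'', hx'', hrange⟩ := main
    obtain ⟨k', hk', x', hx', hinj', hr'⟩ := ih k'' hk'' x'' hx''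
    exact ⟨k', by omega, x', hx', hinj', hr'.trans hrange⟩
end
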